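/- arXiv:1704.01172 — 8 statements merged into one kernel-verified Lean document; each statement's English description precedes it below -/
import Mathlib

section
/- Let G be a finite simple graph and let w be an edge-injective edge-weighting of G with strictly positive integer weights. If uv is an edge of G with deg(u) = deg(v) = 2, then σ_w(u) ≠ σ_w(v). -/
open scoped Classical
open Finset

/-- The degree of a vertex `v` in a finite simple graph `G`. -/
noncomputable def degG {V : Type*} [Fintype V] (G : SimpleGraph V) (v : V) : ℕ :=
  (Finset.univ.filter (fun x => G.Adj v x)).card

/-- The sum `σ_w(v)` of the weights of the edges of `G` incident to `v`. -/
noncomputable def vSum {V : Type*} [Fintype V] (G : SimpleGraph V) (w : Sym2 V → ℕ) (v : V) : ℕ :=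
  ∑ x ∈ Finset.univ.filter (fun x => G.Adj v x), w s(v, x)

/-- An edge-weighting is edge-injective if distinct edges receive distinct weights. -/
def EdgeInjective {V : Type*} (G : SimpleGraph V) (w : Sym2 V → ℕ) : Prop :=
  ∀ e ∈ G.edgeSet, ∀ f ∈ G.edgeSet, w e = w f → e = f

/-- An edge-weighting is neighbour-sum-distinguishing if `σ_w(u) ≠ σ_w(v)` for every edge `uv`. -/
def NSD {V : Type*} [Fintype V] (G : SimpleGraph V) (w : Sym2 V → ℕ) : Prop :=
  ∀ u v, G.Adj u v → vSum G w u ≠ vSum G w v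

/-- A graph is nice if no edge has both of its endpoints of degree 1
(equivalently, no connected component is isomorphic to `K₂`). -/
def Nice {V : Type*} [Fintype V] (G : SimpleGraph V) : Prop :=
  ∀ u v, G.Adj u v → ¬ (degG G u = 1 ∧ degG G v = 1)

lemma aux_deg2 {V : Type*} [Fintype V] (G : SimpleGraph V) (w : Sym2 V → ℕ)
    (u v : V) (huv : G.Adj u v) (hu : degG G u = 2) :
    ∃ a, G.Adj u a ∧ a ≠ v ∧ vSum G w u = w s(u, v) + w s(u, a) := by
  classical
  set N := Finset.univ.filter (fun x => G.Adj u x) with hN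
  have hvN : v ∈ N := by simp [hN, huv]
  have hcard : (N.erase v).card = 1 := by
    rw [Finset.card_erase_of_mem hvN]
    simp [degG] at hu
    simp [hN, hu]
  obtain ⟨a, ha⟩ := Finset.card_eq_one.mp hcard
  have haN : a ∈ N.erase v := by simp [ha]
  have hav : a ≠ v := (Finset.mem_erase.mp haN).1
  have haAdj : G.Adj u a := by
    have := (Finset.mem_erase.mp haN).2
    simpa [hN] using this
  refine ⟨a, haAdj, hav, ?_⟩
  have hNe : N = insert v {a} := by
    rw [← ha, Finset.insert_erase hvN]
  rw [vSum, ← hN, hNe]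
  rw [Finset.sum_insert (by simp [hav.symm]), Finset.sum_singleton]

theorem stmt_1 {V : Type*} [Fintype V] (G : SimpleGraph V) (w : Sym2 V → ℕ)
    (hpos : ∀ e ∈ G.edgeSet, 0 < w e) (hinj : EdgeInjective G w)
    (u v : V) (huv : G.Adj u v) (hu : degG G u = 2) (hv : degG G v = 2) :
    vSum G w u ≠ vSum G w v := by
  obtain ⟨a, haAdj, hav, hsa⟩ := aux_deg2 G w u v huv hu
  obtain ⟨b, hbAdj, hbu, hsb⟩ := aux_deg2 G w v u huv.symm hv
  intro h
  rw [hsa, hsb, Sym2.eq_swap (a := v) (b := u)] at h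
  have hw : w s(u, a) = w s(v, b) := by omega
  have := hinj _ haAdj _ hbAdj hw
  rw [Sym2.eq_iff] at this
  rcases this with ⟨h1, h2⟩ | ⟨h1, h2⟩
  · exact G.ne_of_adj huv h1
  · exact hav h2
end

section
/- Let G be a finite simple graph and let w be an edge-injective edge-weighting of G with strictly positive integer weights. Let uv be an edge of G with deg(u) ≥ deg(v) and deg(u) ≥ 2. If min{w(uv') : v' ∈ N(u) \ {v}} ≥ max{w(vu') : u' ∈ N(v) \ {u}} (where the max over an empty set is taken to be 0), then σ_w(u) ≠ σ_w(v); in fact σ_w(u) > σ_w(v). -/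
open scoped Classical
open Finset

theorem stmt_2 {V : Type*} [Fintype V] (G : SimpleGraph V) (w : Sym2 V → ℕ)
    (hpos : ∀ e ∈ G.edgeSet, 0 < w e) (hinj : EdgeInjective G w)
    (u v : V) (huv : G.Adj u v) (hdeg : degG G v ≤ degG G u) (hu : 2 ≤ degG G u)
    (hminmax : ∀ v' ∈ (Finset.univ.filter (fun x => G.Adj u x)).erase v,
      ((Finset.univ.filter (fun x => G.Adj v x)).erase u).sup (fun u' => w s(v, u'))
        ≤ w s(u, v')) :
    vSum G w u ≠ vSum G w v ∧ vSum G w v < vSum G w u := by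

  classical
  set Nu := Finset.univ.filter (fun x => G.Adj u x) with hNu
  set Nv := Finset.univ.filter (fun x => G.Adj v x) with hNv
  have hvNu : v ∈ Nu := by simp [hNu, huv]
  have huNv : u ∈ Nv := by simp [hNv, huv.symm]
  have hAcard : (Nu.erase v).card = degG G u - 1 := by
    rw [Finset.card_erase_of_mem hvNu]; rfl
  have hBcard : (Nv.erase u).card = degG G v - 1 := by
    rw [Finset.card_erase_of_mem huNv]; rfl
  have hApos : 0 < (Nu.erase v).card := by rw [hAcard]; omega
  have hAne : (Nu.erase v).Nonempty := Finset.card_pos.mp hApos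
  set m := (Nu.erase v).inf' hAne (fun a => w s(u, a)) with hm
  obtain ⟨a, ha, hma⟩ := Finset.exists_mem_eq_inf' hAne (fun a => w s(u, a))
  have hadj : G.Adj u a := (Finset.mem_filter.mp (Finset.mem_of_mem_erase ha)).2
  have hmem_a : s(u, a) ∈ G.edgeSet := G.mem_edgeSet.mpr hadj
  have hmpos : 0 < m := by rw [hm, hma]; exact hpos _ hmem_a
  -- each b-edge weight is < m
  have hblt : ∀ b ∈ Nv.erase u, w s(v, b) < m := by
    intro b hb
    have hadjb : G.Adj v b := (Finset.mem_filter.mp (Finset.mem_of_mem_erase hb)).2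
    have hle : w s(v, b) ≤ w s(u, a) :=
      le_trans (Finset.le_sup (f := fun u' => w s(v, u')) hb) (hminmax a ha)
    have hne : w s(v, b) ≠ w s(u, a) := by
      intro heq
      have := hinj _ (G.mem_edgeSet.mpr hadjb) _ hmem_a heq
      rw [Sym2.eq_iff] at this
      rcases this with ⟨h1, h2⟩ | ⟨h1, h2⟩
      · exact huv.ne h1.symm
      · exact (Finset.ne_of_mem_erase ha) h1.symm
    rw [hm, hma]
    exact lt_of_le_of_ne hle hne
  -- sum comparison
  have hsumB : ∑ b ∈ Nv.erase u, w s(v, b) ≤ (Nv.erase u).card * (m - 1) := by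
    have := Finset.sum_le_card_nsmul (Nv.erase u) (fun b => w s(v, b)) (m - 1)
      (fun b hb => by have := hblt b hb; show w s(v, b) ≤ m - 1; omega)
    simpa using this
  have hsumA : (Nu.erase v).card * m ≤ ∑ a ∈ Nu.erase v, w s(u, a) := by
    have := Finset.card_nsmul_le_sum (Nu.erase v) (fun a => w s(u, a)) m
      (fun a ha => Finset.inf'_le _ ha)
    simpa using this
  have hBA : (Nv.erase u).card ≤ (Nu.erase v).card := by
    rw [hAcard, hBcard]; omega
  have key : ∑ b ∈ Nv.erase u, w s(v, b) < ∑ a ∈ Nu.erase v, w s(u, a) := by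
    calc ∑ b ∈ Nv.erase u, w s(v, b) ≤ (Nv.erase u).card * (m - 1) := hsumB
      _ ≤ (Nu.erase v).card * (m - 1) := Nat.mul_le_mul_right _ hBA
      _ < (Nu.erase v).card * m := by
          exact mul_lt_mul_of_pos_left (by omega) hApos
      _ ≤ _ := hsumA
  have hdecompU : vSum G w u = w s(u, v) + ∑ a ∈ Nu.erase v, w s(u, a) := by
    rw [vSum, ← hNu, ← Finset.add_sum_erase Nu (fun x => w s(u, x)) hvNu]
  have hdecompV : vSum G w v = w s(v, u) + ∑ b ∈ Nv.erase u, w s(v, b) := by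
    rw [vSum, ← hNv, ← Finset.add_sum_erase Nv (fun x => w s(v, x)) huNv]
  have hsw : s(v, u) = s(u, v) := Sym2.eq_swap
  have hlt : vSum G w v < vSum G w u := by
    rw [hdecompU, hdecompV, hsw]; omega
  exact ⟨(Nat.ne_of_lt hlt).symm, hlt⟩
end

section
/- Let G be a finite simple graph, let uv be an edge of G, and let w be a neighbour-sum-distinguishing edge-weighting (with strictly positive integer weights) of G − uv (the graph G with the edge uv removed) such that σ_w(u) ≠ σ_w(v). If W is a set of at least deg_G(u) + deg_G(v) − 1 distinct strictly positive integers, then there exists α ∈ W such that the extension of w assigning weight α to uv is a neighbour-sum-distinguishing edge-weighting of G. -/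
open scoped Classical
open Finset

theorem stmt_3 {V : Type*} [Fintype V] (G : SimpleGraph V) (u v : V) (huv : G.Adj u v)
    (w : Sym2 V → ℕ)
    (hpos : ∀ e ∈ (G.deleteEdges {s(u, v)}).edgeSet, 0 < w e)
    (hnsd : NSD (G.deleteEdges {s(u, v)}) w)
    (hne : vSum (G.deleteEdges {s(u, v)}) w u ≠ vSum (G.deleteEdges {s(u, v)}) w v)
    (W : Finset ℕ) (hWpos : ∀ x ∈ W, 0 < x)
    (hWcard : degG G u + degG G v - 1 ≤ W.card) :
    ∃ α ∈ W, NSD G (fun e => if e = s(u, v) then α else w e) := by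
  classical
  have hune : u ≠ v := G.ne_of_adj huv
  set G' := G.deleteEdges {s(u, v)} with hG'
  have hadj' : ∀ a b : V, G'.Adj a b ↔ G.Adj a b ∧ s(a, b) ≠ s(u, v) := by
    intro a b
    simp [hG', SimpleGraph.deleteEdges_adj]
  set σ := vSum G' w with hσ
  -- sums at vertices other than u, v are unchanged
  have hsum_other : ∀ (α : ℕ) (x : V), x ≠ u → x ≠ v →
      vSum G (fun e => if e = s(u, v) then α else w e) x = σ x := by
    intro α x hxu hxv
    unfold vSum
    have hfilter : univ.filter (fun y => G.Adj x y) = univ.filter (fun y => G'.Adj x y) := by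
      ext y
      simp only [mem_filter, mem_univ, true_and, hadj']
      constructor
      · intro h
        refine ⟨h, fun he => ?_⟩
        rcases Sym2.eq_iff.mp he with ⟨h1, h2⟩ | ⟨h1, h2⟩ <;> simp_all
      · tauto
    rw [hfilter]
    rw [hσ]; unfold vSum
    apply Finset.sum_congr (by ext; simp)
    intro y hy
    simp only [mem_filter, mem_univ, true_and, hadj'] at hy
    beta_reduce
    rw [if_neg hy.2]
  have hvnot : v ∉ univ.filter (fun y => G'.Adj u y) := by
    simp [hadj']
  have hunot : u ∉ univ.filter (fun y => G'.Adj v y) := by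
    simp [hadj', Sym2.eq_swap]
  have hNu : univ.filter (fun y => G.Adj u y) = insert v (univ.filter (fun y => G'.Adj u y)) := by
    ext y
    simp only [mem_insert, mem_filter, mem_univ, true_and, hadj']
    constructor
    · intro h
      by_cases hy : y = v
      · exact Or.inl hy
      · exact Or.inr ⟨h, fun he => by
          rcases Sym2.eq_iff.mp he with ⟨h1, h2⟩ | ⟨h1, h2⟩ <;> simp_all⟩
    · rintro (rfl | ⟨h, _⟩)
      · exact huv
      · exact h
  have hNv : univ.filter (fun y => G.Adj v y) = insert u (univ.filter (fun y => G'.Adj v y)) := by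
    ext y
    simp only [mem_insert, mem_filter, mem_univ, true_and, hadj']
    constructor
    · intro h
      by_cases hy : y = u
      · exact Or.inl hy
      · exact Or.inr ⟨h, fun he => by
          rcases Sym2.eq_iff.mp he with ⟨h1, h2⟩ | ⟨h1, h2⟩ <;> simp_all⟩
    · rintro (rfl | ⟨h, _⟩)
      · exact huv.symm
      · exact h
  have hsum_u : ∀ α : ℕ, vSum G (fun e => if e = s(u, v) then α else w e) u = σ u + α := by
    intro α
    unfold vSum
    rw [hNu, Finset.sum_insert hvnot]
    beta_reduce
    rw [if_pos rfl, add_comm]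
    congr 1
    rw [hσ]; unfold vSum
    apply Finset.sum_congr (by ext; simp)
    intro y hy
    simp only [mem_filter, mem_univ, true_and, hadj'] at hy
    beta_reduce
    rw [if_neg hy.2]
  have hsum_v : ∀ α : ℕ, vSum G (fun e => if e = s(u, v) then α else w e) v = σ v + α := by
    intro α
    unfold vSum
    rw [hNv, Finset.sum_insert hunot]
    beta_reduce
    rw [if_pos (by rw [Sym2.eq_swap]), add_comm]
    congr 1
    rw [hσ]; unfold vSum
    apply Finset.sum_congr (by ext; simp)
    intro y hy
    simp only [mem_filter, mem_univ, true_and, hadj'] at hy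
    beta_reduce
    rw [if_neg hy.2]
  -- bad values
  set Bu := ((univ.filter (fun x => G.Adj u x)).erase v).image (fun x => σ x - σ u) with hBu
  set Bv := ((univ.filter (fun x => G.Adj v x)).erase u).image (fun x => σ x - σ v) with hBv
  have hvmem : v ∈ univ.filter (fun x => G.Adj u x) := by simp [huv]
  have humem : u ∈ univ.filter (fun x => G.Adj v x) := by simp [huv.symm]
  have hdu : 1 ≤ degG G u := by
    rw [degG]; exact Finset.card_pos.mpr ⟨v, hvmem⟩
  have hdv : 1 ≤ degG G v := by
    rw [degG]; exact Finset.card_pos.mpr ⟨u, humem⟩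
  have hBucard : Bu.card ≤ degG G u - 1 := by
    refine le_trans Finset.card_image_le ?_
    rw [Finset.card_erase_of_mem hvmem]; rfl
  have hBvcard : Bv.card ≤ degG G v - 1 := by
    refine le_trans Finset.card_image_le ?_
    rw [Finset.card_erase_of_mem humem]; rfl
  have hcard : (Bu ∪ Bv).card < W.card := by
    have h1 := Finset.card_union_le Bu Bv
    omega
  have hex : (W \ (Bu ∪ Bv)).Nonempty := by
    rw [← Finset.card_pos]
    have := Finset.le_card_sdiff (Bu ∪ Bv) W
    omega
  obtain ⟨α, hα⟩ := hex
  rw [Finset.mem_sdiff, Finset.mem_union] at hα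
  obtain ⟨hαW, hαB⟩ := hα
  have hαBu : α ∉ Bu := fun h => hαB (Or.inl h)
  have hαBv : α ∉ Bv := fun h => hαB (Or.inr h)
  refine ⟨α, hαW, ?_⟩
  intro a b hab
  have hab' : a ≠ b := G.ne_of_adj hab
  by_cases he : s(a, b) = s(u, v)
  · rcases Sym2.eq_iff.mp he with ⟨rfl, rfl⟩ | ⟨rfl, rfl⟩
    · rw [hsum_u, hsum_v]; intro h; exact hne (by omega)
    · rw [hsum_v, hsum_u]; intro h; exact hne (by omega)
  · -- edge ab is in G'
    have habG' : G'.Adj a b := (hadj' a b).mpr ⟨hab, he⟩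
    by_cases hau : a = u
    · subst hau
      have hbv : b ≠ v := fun h => he (by rw [h])
      rw [hsum_u, hsum_other α b (Ne.symm hab') hbv]
      intro h
      exact hαBu (Finset.mem_image.mpr ⟨b, Finset.mem_erase.mpr ⟨hbv, by simp [hab]⟩, by omega⟩)
    · by_cases hav : a = v
      · subst hav
        have hbu : b ≠ u := fun h => he (by rw [h, Sym2.eq_swap])
        rw [hsum_v, hsum_other α b hbu (Ne.symm hab')]
        intro h
        exact hαBv (Finset.mem_image.mpr ⟨b, Finset.mem_erase.mpr ⟨hbu, by simp [hab]⟩, by omega⟩)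
      · by_cases hbu : b = u
        · subst hbu
          have hav' : a ≠ v := hav
          rw [hsum_u, hsum_other α a hau hav']
          intro h
          exact hαBu (Finset.mem_image.mpr ⟨a, Finset.mem_erase.mpr ⟨hav', by simp [hab.symm]⟩,
            by omega⟩)
        · by_cases hbv : b = v
          · subst hbv
            rw [hsum_v, hsum_other α a hau hav]
            intro h
            exact hαBv (Finset.mem_image.mpr ⟨a, Finset.mem_erase.mpr ⟨hau, by simp [hab.symm]⟩,
              by omega⟩)
          · rw [hsum_other α a hau hav, hsum_other α b hbu hbv]
            exact hnsd a b habG'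
end

section
/- Let G be a finite simple graph having two adjacent edges vu₁ and vu₂ (with u₁ ≠ u₂) such that G' := G − {vu₁, vu₂} admits a neighbour-sum-distinguishing edge-weighting w (with strictly positive integer weights). Assume deg_G(u₁) ≥ deg_G(u₂), and set μ := (deg_G(u₁) + 1) + max{0, deg_G(v) + deg_G(u₂) − deg_G(u₁) − 1}. If W is a set of at least μ distinct strictly positive integers, then there exist two distinct weights α, β ∈ W such that the extension of w assigning α to vu₁ and β to vu₂ is a neighbour-sum-distinguishing edge-weighting of G. -/
open scoped Classical
open Finset

lemma sum_ext {V : Type*} [Fintype V] (G : SimpleGraph V) (v u₁ u₂ : V) (hne : u₁ ≠ u₂)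
    (h₁ : G.Adj v u₁) (h₂ : G.Adj v u₂) (w : Sym2 V → ℕ) (α β : ℕ) (x : V) :
    vSum G (fun e => if e = s(v,u₁) then α else if e = s(v,u₂) then β else w e) x
      = vSum (G.deleteEdges {s(v,u₁), s(v,u₂)}) w x
        + (if x = v then α + β else if x = u₁ then α else if x = u₂ then β else 0) := by
  classical
  have hvu₁ : v ≠ u₁ := G.ne_of_adj h₁
  have hvu₂ : v ≠ u₂ := G.ne_of_adj h₂
  set G' := G.deleteEdges {s(v,u₁), s(v,u₂)} with hG'
  have hadj : ∀ a b, G'.Adj a b ↔ G.Adj a b ∧ s(a,b) ≠ s(v,u₁) ∧ s(a,b) ≠ s(v,u₂) := by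
    intro a b
    simp [hG', SimpleGraph.deleteEdges_adj]
  have nsy1 : ∀ a b : V, (a ≠ v ∨ b ≠ u₁) → (a ≠ u₁ ∨ b ≠ v) → s(a,b) ≠ s(v,u₁) := by
    intro a b hA hB h
    rw [Sym2.eq_iff] at h
    tauto
  have nsy2 : ∀ a b : V, (a ≠ v ∨ b ≠ u₂) → (a ≠ u₂ ∨ b ≠ v) → s(a,b) ≠ s(v,u₂) := by
    intro a b hA hB h
    rw [Sym2.eq_iff] at h
    tauto
  have hw : ∀ a b, G'.Adj a b →
      (if s(a,b) = s(v,u₁) then α else if s(a,b) = s(v,u₂) then β else w s(a,b)) = w s(a,b) := by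
    intro a b hab
    rw [hadj] at hab
    simp [hab.2.1, hab.2.2]
  by_cases hxv : x = v
  · rw [hxv, if_pos rfl]
    have hset : univ.filter (fun y => G.Adj v y)
        = insert u₁ (insert u₂ (univ.filter (fun y => G'.Adj v y))) := by
      ext y
      simp only [mem_filter, mem_univ, true_and, mem_insert, hadj]
      constructor
      · intro hy
        rcases eq_or_ne y u₁ with rfl | hy1
        · exact Or.inl rfl
        rcases eq_or_ne y u₂ with rfl | hy2
        · exact Or.inr (Or.inl rfl)
        exact Or.inr (Or.inr ⟨hy, nsy1 _ _ (Or.inr hy1) (Or.inl hvu₁),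
          nsy2 _ _ (Or.inr hy2) (Or.inl hvu₂)⟩)
      · rintro (rfl | rfl | h)
        exacts [h₁, h₂, h.1]
    have hu₁ : u₁ ∉ insert u₂ (univ.filter (fun y => G'.Adj v y)) := by
      simp only [mem_insert, mem_filter, mem_univ, true_and, hadj]
      rintro (h | ⟨-, h, -⟩)
      · exact hne h
      · exact h (by rw [Sym2.eq_iff]; exact Or.inl ⟨rfl, rfl⟩)
    have hu₂ : u₂ ∉ univ.filter (fun y => G'.Adj v y) := by
      simp only [mem_filter, mem_univ, true_and, hadj]
      rintro ⟨-, -, h⟩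
      exact h (by rw [Sym2.eq_iff]; exact Or.inl ⟨rfl, rfl⟩)
    simp only [vSum, hset, sum_insert hu₁, sum_insert hu₂,
      Finset.sum_congr rfl (fun y hy => hw v y (mem_filter.mp hy).2)]
    simp [Sym2.eq_iff, hvu₁, hvu₂, hne, Ne.symm hne, Ne.symm hvu₁, Ne.symm hvu₂]
    ring_nf
    congr!
  · rw [if_neg hxv]
    by_cases hx1 : x = u₁
    · rw [hx1, if_pos rfl]
      have hset : univ.filter (fun y => G.Adj u₁ y)
          = insert v (univ.filter (fun y => G'.Adj u₁ y)) := by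
        ext y
        simp only [mem_filter, mem_univ, true_and, mem_insert, hadj]
        constructor
        · intro hy
          rcases eq_or_ne y v with rfl | hyv
          · exact Or.inl rfl
          exact Or.inr ⟨hy, nsy1 _ _ (Or.inl hvu₁.symm) (Or.inr hyv),
            nsy2 _ _ (Or.inl hvu₁.symm) (Or.inl hne)⟩
        · rintro (rfl | h)
          exacts [h₁.symm, h.1]
      have hv : v ∉ univ.filter (fun y => G'.Adj u₁ y) := by
        simp only [mem_filter, mem_univ, true_and, hadj]
        rintro ⟨-, h, -⟩
        exact h (by rw [Sym2.eq_iff]; exact Or.inr ⟨rfl, rfl⟩)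
      simp only [vSum, hset, sum_insert hv,
        Finset.sum_congr rfl (fun y hy => hw u₁ y (mem_filter.mp hy).2)]
      simp [Sym2.eq_iff, hvu₁, hvu₂, hne, Ne.symm hne, Ne.symm hvu₁, Ne.symm hvu₂]
      ring_nf
      congr!
    · rw [if_neg hx1]
      by_cases hx2 : x = u₂
      · rw [hx2, if_pos rfl]
        have hset : univ.filter (fun y => G.Adj u₂ y)
            = insert v (univ.filter (fun y => G'.Adj u₂ y)) := by
          ext y
          simp only [mem_filter, mem_univ, true_and, mem_insert, hadj]
          constructor
          · intro hy
            rcases eq_or_ne y v with rfl | hyv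
            · exact Or.inl rfl
            exact Or.inr ⟨hy, nsy1 _ _ (Or.inl hvu₂.symm) (Or.inl (Ne.symm hne)),
              nsy2 _ _ (Or.inl hvu₂.symm) (Or.inr hyv)⟩
          · rintro (rfl | h)
            exacts [h₂.symm, h.1]
        have hv : v ∉ univ.filter (fun y => G'.Adj u₂ y) := by
          simp only [mem_filter, mem_univ, true_and, hadj]
          rintro ⟨-, -, h⟩
          exact h (by rw [Sym2.eq_iff]; exact Or.inr ⟨rfl, rfl⟩)
        simp only [vSum, hset, sum_insert hv,
          Finset.sum_congr rfl (fun y hy => hw u₂ y (mem_filter.mp hy).2)]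
        simp [Sym2.eq_iff, hvu₁, hvu₂, hne, Ne.symm hne, Ne.symm hvu₁, Ne.symm hvu₂]
        ring_nf
        congr!
      · rw [if_neg hx2, add_zero]
        have hset : univ.filter (fun y => G.Adj x y) = univ.filter (fun y => G'.Adj x y) := by
          ext y
          simp only [mem_filter, mem_univ, true_and, hadj]
          exact ⟨fun hy => ⟨hy, nsy1 _ _ (Or.inl hxv) (Or.inl hx1),
            nsy2 _ _ (Or.inl hxv) (Or.inl hx2)⟩, fun h => h.1⟩
        simp only [vSum, hset]
        exact Finset.sum_congr (by congr) (fun y hy => hw x y (by simpa using hy))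

theorem stmt_4 {V : Type*} [Fintype V] (G : SimpleGraph V) (v u₁ u₂ : V) (hne : u₁ ≠ u₂)
    (h₁ : G.Adj v u₁) (h₂ : G.Adj v u₂) (hdeg : degG G u₂ ≤ degG G u₁)
    (w : Sym2 V → ℕ)
    (hpos : ∀ e ∈ (G.deleteEdges {s(v, u₁), s(v, u₂)}).edgeSet, 0 < w e)
    (hnsd : NSD (G.deleteEdges {s(v, u₁), s(v, u₂)}) w)
    (W : Finset ℕ) (hWpos : ∀ x ∈ W, 0 < x)
    (hWcard : (degG G u₁ + 1) + max 0 (degG G v + degG G u₂ - degG G u₁ - 1) ≤ W.card) :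
    ∃ α ∈ W, ∃ β ∈ W, α ≠ β ∧
      NSD G (fun e => if e = s(v, u₁) then α else if e = s(v, u₂) then β else w e) := by
  classical
  have hvu₁ : v ≠ u₁ := G.ne_of_adj h₁
  have hvu₂ : v ≠ u₂ := G.ne_of_adj h₂
  set G' := G.deleteEdges {s(v,u₁), s(v,u₂)} with hG'
  set σ : V → ℕ := vSum G' w with hσ
  -- neighbourhood finsets
  set N1 : Finset V := (univ.filter (fun y => G.Adj u₁ y)).erase v with hN1def
  set N2 : Finset V := (univ.filter (fun y => G.Adj u₂ y)).erase v with hN2def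
  set Nv : Finset V := ((univ.filter (fun y => G.Adj v y)).erase u₁).erase u₂ with hNvdef
  have hvmem1 : v ∈ univ.filter (fun y => G.Adj u₁ y) := mem_filter.mpr ⟨mem_univ _, h₁.symm⟩
  have hvmem2 : v ∈ univ.filter (fun y => G.Adj u₂ y) := mem_filter.mpr ⟨mem_univ _, h₂.symm⟩
  have hu₁mem : u₁ ∈ univ.filter (fun y => G.Adj v y) := mem_filter.mpr ⟨mem_univ _, h₁⟩
  have hu₂mem : u₂ ∈ (univ.filter (fun y => G.Adj v y)).erase u₁ :=
    mem_erase.mpr ⟨hne.symm, mem_filter.mpr ⟨mem_univ _, h₂⟩⟩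
  have hN1card : N1.card = degG G u₁ - 1 := by
    rw [hN1def, card_erase_of_mem hvmem1]; rfl
  have hN2card : N2.card = degG G u₂ - 1 := by
    rw [hN2def, card_erase_of_mem hvmem2]; rfl
  have hNvcard : Nv.card = degG G v - 2 := by
    rw [hNvdef, card_erase_of_mem hu₂mem, card_erase_of_mem hu₁mem]
    rfl
  have hd1 : 1 ≤ degG G u₁ := Finset.card_pos.mpr ⟨v, hvmem1⟩
  have hd2 : 1 ≤ degG G u₂ := Finset.card_pos.mpr ⟨v, hvmem2⟩
  have hdv : 2 ≤ degG G v := by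
    have h' := Finset.card_pos.mpr ⟨u₂, hu₂mem⟩
    have := card_erase_of_mem hu₁mem
    unfold degG
    omega
  have hW1 : degG G u₁ + 1 ≤ W.card := by omega
  have hW2 : degG G v + degG G u₂ ≤ W.card := by omega
  -- choose α
  set A : Finset ℕ := insert (σ u₂ - σ v) (N1.image (fun y => σ y - σ u₁)) with hAdef
  have hAcard : A.card ≤ degG G u₁ := by
    calc A.card ≤ (N1.image (fun y => σ y - σ u₁)).card + 1 := card_insert_le _ _
    _ ≤ N1.card + 1 := by have := Finset.card_image_le (s := N1) (f := fun y => σ y - σ u₁); omega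
    _ ≤ degG G u₁ := by omega
  obtain ⟨α, hαWA⟩ : (W \ A).Nonempty := by
    rw [← Finset.card_pos]
    have := Finset.le_card_sdiff A W
    omega
  obtain ⟨hαW, hαA⟩ := Finset.mem_sdiff.mp hαWA
  -- choose β
  set f : V → ℕ := fun y => if y = u₁ then σ u₁ + α - σ u₂ else σ y - σ u₂ with hfdef
  set B : Finset ℕ := insert (σ u₁ - σ v)
      (insert α ((N2.image f) ∪ (Nv.image (fun y => σ y - σ v - α)))) with hBdef
  have hBcard : B.card ≤ degG G v + degG G u₂ - 1 := by
    have i1 := Finset.card_image_le (s := N2) (f := f)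
    have i2 := Finset.card_image_le (s := Nv) (f := fun y => σ y - σ v - α)
    have i3 := Finset.card_union_le (N2.image f) (Nv.image (fun y => σ y - σ v - α))
    calc B.card ≤ (insert α ((N2.image f) ∪ (Nv.image (fun y => σ y - σ v - α)))).card + 1 :=
          card_insert_le _ _
    _ ≤ ((N2.image f) ∪ (Nv.image (fun y => σ y - σ v - α))).card + 2 := by
          have := card_insert_le α ((N2.image f) ∪ (Nv.image (fun y => σ y - σ v - α))); omega
    _ ≤ degG G v + degG G u₂ - 1 := by omega
  obtain ⟨β, hβWB⟩ : (W \ B).Nonempty := by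
    rw [← Finset.card_pos]
    have := Finset.le_card_sdiff B W
    omega
  obtain ⟨hβW, hβB⟩ := Finset.mem_sdiff.mp hβWB
  -- extract the avoided constraints
  have hα1 : σ v + α ≠ σ u₂ := by
    intro h
    exact hαA (mem_insert.mpr (Or.inl (by omega)))
  have hα2 : ∀ y ∈ N1, σ u₁ + α ≠ σ y := by
    intro y hy h
    exact hαA (mem_insert.mpr (Or.inr (mem_image.mpr ⟨y, hy, by omega⟩)))
  have hβ1 : σ v + β ≠ σ u₁ := by
    intro h
    exact hβB (mem_insert.mpr (Or.inl (by omega)))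
  have hβα : β ≠ α := by
    intro h
    exact hβB (mem_insert.mpr (Or.inr (mem_insert.mpr (Or.inl h))))
  have hβ2 : ∀ y ∈ N2, y ≠ u₁ → σ u₂ + β ≠ σ y := by
    intro y hy hy1 h
    refine hβB (mem_insert.mpr (Or.inr (mem_insert.mpr (Or.inr
      (mem_union_left _ (mem_image.mpr ⟨y, hy, ?_⟩))))))
    have : f y = σ y - σ u₂ := by simp [hfdef, hy1]
    omega
  have hβ12 : u₁ ∈ N2 → σ u₁ + α ≠ σ u₂ + β := by
    intro hm h
    refine hβB (mem_insert.mpr (Or.inr (mem_insert.mpr (Or.inr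
      (mem_union_left _ (mem_image.mpr ⟨u₁, hm, ?_⟩))))))
    have : f u₁ = σ u₁ + α - σ u₂ := by simp [hfdef]
    omega
  have hβv : ∀ y ∈ Nv, σ v + α + β ≠ σ y := by
    intro y hy h
    refine hβB (mem_insert.mpr (Or.inr (mem_insert.mpr (Or.inr
      (mem_union_right _ (mem_image.mpr ⟨y, hy, by omega⟩))))))
  -- membership helpers
  have mN1 : ∀ y, G.Adj u₁ y → y ≠ v → y ∈ N1 := fun y hy hyv =>
    mem_erase.mpr ⟨hyv, mem_filter.mpr ⟨mem_univ _, hy⟩⟩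
  have mN2 : ∀ y, G.Adj u₂ y → y ≠ v → y ∈ N2 := fun y hy hyv =>
    mem_erase.mpr ⟨hyv, mem_filter.mpr ⟨mem_univ _, hy⟩⟩
  have mNv : ∀ y, G.Adj v y → y ≠ u₁ → y ≠ u₂ → y ∈ Nv := fun y hy hy1 hy2 =>
    mem_erase.mpr ⟨hy2, mem_erase.mpr ⟨hy1, mem_filter.mpr ⟨mem_univ _, hy⟩⟩⟩
  have Ev : (if v = v then α + β else if v = u₁ then α else if v = u₂ then β else 0) = α + β := by
    simp
  have E1 : (if u₁ = v then α + β else if u₁ = u₁ then α else if u₁ = u₂ then β else 0) = α := by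
    simp [hvu₁.symm]
  have E2 : (if u₂ = v then α + β else if u₂ = u₁ then α else if u₂ = u₂ then β else 0) = β := by
    simp [hvu₂.symm, hne.symm]
  have Eo : ∀ x : V, x ≠ v → x ≠ u₁ → x ≠ u₂ →
      (if x = v then α + β else if x = u₁ then α else if x = u₂ then β else 0) = 0 := by
    intro x hx1 hx2 hx3
    simp [hx1, hx2, hx3]
  refine ⟨α, hαW, β, hβW, hβα.symm, ?_⟩
  intro a b hab
  have hS := sum_ext G v u₁ u₂ hne h₁ h₂ w α β
  rw [hS a, hS b, ← hG', ← hσ]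
  rcases eq_or_ne a v with hav | hav
  · rw [hav] at hab ⊢
    have hbv : b ≠ v := (G.ne_of_adj hab).symm
    rcases eq_or_ne b u₁ with hb1 | hb1
    · rw [hb1] at hab ⊢
      rw [Ev, E1]
      intro h; exact hβ1 (by omega)
    rcases eq_or_ne b u₂ with hb2 | hb2
    · rw [hb2] at hab ⊢
      rw [Ev, E2]
      intro h; exact hα1 (by omega)
    · rw [Ev, Eo b hbv hb1 hb2, add_zero]
      intro h; exact hβv b (mNv b hab hb1 hb2) (by omega)
  rcases eq_or_ne a u₁ with ha1 | ha1
  · rw [ha1] at hab ⊢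
    rcases eq_or_ne b v with hbv | hbv
    · rw [hbv] at hab ⊢
      rw [Ev, E1]
      intro h; exact hβ1 (by omega)
    rcases eq_or_ne b u₂ with hb2 | hb2
    · rw [hb2] at hab ⊢
      rw [E1, E2]
      intro h; exact hβ12 (mN2 u₁ hab.symm hvu₁.symm) (by omega)
    · have hb1 : b ≠ u₁ := (G.ne_of_adj hab).symm
      rw [E1, Eo b hbv hb1 hb2, add_zero]
      intro h; exact hα2 b (mN1 b hab hbv) (by omega)
  rcases eq_or_ne a u₂ with ha2 | ha2
  · rw [ha2] at hab ⊢
    rcases eq_or_ne b v with hbv | hbv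
    · rw [hbv] at hab ⊢
      rw [Ev, E2]
      intro h; exact hα1 (by omega)
    rcases eq_or_ne b u₁ with hb1 | hb1
    · rw [hb1] at hab ⊢
      rw [E1, E2]
      intro h; exact hβ12 (mN2 u₁ hab hvu₁.symm) (by omega)
    · have hb2 : b ≠ u₂ := (G.ne_of_adj hab).symm
      rw [E2, Eo b hbv hb1 hb2, add_zero]
      intro h; exact hβ2 b (mN2 b hab hbv) hb1 (by omega)
  · rw [Eo a hav ha1 ha2, add_zero]
    rcases eq_or_ne b v with hbv | hbv
    · rw [hbv] at hab ⊢
      rw [Ev]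
      intro h; exact hβv a (mNv a hab.symm ha1 ha2) (by omega)
    rcases eq_or_ne b u₁ with hb1 | hb1
    · rw [hb1] at hab ⊢
      rw [E1]
      intro h; exact hα2 a (mN1 a hab.symm hav) (by omega)
    rcases eq_or_ne b u₂ with hb2 | hb2
    · rw [hb2] at hab ⊢
      rw [E2]
      intro h; exact hβ2 a (mN2 a hab.symm hav) ha1 (by omega)
    · rw [Eo b hbv hb1 hb2, add_zero]
      have hab' : G'.Adj a b := by
        rw [hG', SimpleGraph.deleteEdges_adj]
        refine ⟨hab, ?_⟩
        intro hmem
        rcases hmem with h | h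
        · rw [Sym2.eq_iff] at h; tauto
        · simp only [Set.mem_singleton_iff] at h
          rw [Sym2.eq_iff] at h; tauto
      exact hnsd a b hab'
end

section
/- Let G be a nice finite simple graph with maximum degree at most 2 and with m := |E(G)| edges. Then there exists a bijection w from the edge set of G onto {1, 2, ..., m} that is a neighbour-sum-distinguishing edge-weighting of G. In particular, χ^{e,1}_Σ(G) = |E(G)|. -/
open scoped Classical
open Finset

/-- `χ^{e,1}_Σ(G)`: the smallest `k` such that `G` admits an edge-injective
neighbour-sum-distinguishing edge-weighting with weights from `{1, ..., k}`. -/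
noncomputable def chiE1 {V : Type*} [Fintype V] (G : SimpleGraph V) : ℕ :=
  sInf {k | ∃ w : Sym2 V → ℕ, (∀ e ∈ G.edgeSet, w e ∈ Finset.Icc 1 k) ∧
    EdgeInjective G w ∧ NSD G w}


lemma nsd_of_inj {V : Type*} [Fintype V] (G : SimpleGraph V) (hnice : Nice G)
    (hΔ : ∀ v, degG G v ≤ 2) (w : Sym2 V → ℕ)
    (hpos : ∀ e ∈ G.edgeSet, 1 ≤ w e)
    (hinj : Set.InjOn w G.edgeSet) : NSD G w := by
  intro u v hadj
  classical
  set A := Finset.univ.filter (fun x => G.Adj u x) with hA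
  set B := Finset.univ.filter (fun x => G.Adj v x) with hB
  have hvA : v ∈ A := by simp [hA, hadj]
  have huB : u ∈ B := by simp [hB, hadj.symm]
  have hsumu : vSum G w u = w s(u,v) + ∑ x ∈ A.erase v, w s(u,x) := by
    rw [vSum, ← Finset.add_sum_erase A _ hvA]
  have hsumv : vSum G w v = w s(u,v) + ∑ x ∈ B.erase u, w s(v,x) := by
    rw [vSum, ← Finset.add_sum_erase B _ huB, Sym2.eq_swap]
  have hAd : A.card = degG G u := rfl
  have hBd : B.card = degG G v := rfl
  have hcases : ∀ (a b : V) (S : Finset V), S = Finset.univ.filter (fun x => G.Adj a x) →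
      b ∈ S → S.card ≤ 2 →
      S.erase b = ∅ ∨ ∃ x, S.erase b = {x} ∧ x ≠ b ∧ G.Adj a x := by
    intro a b S hS hb hle
    have h1 : 1 ≤ S.card := Finset.card_pos.2 ⟨b, hb⟩
    have hce : (S.erase b).card = S.card - 1 := Finset.card_erase_of_mem hb
    interval_cases h : S.card
    · left; rw [← Finset.card_eq_zero]; omega
    · right
      have : (S.erase b).card = 1 := by omega
      obtain ⟨x, hx⟩ := Finset.card_eq_one.1 this
      refine ⟨x, hx, ?_, ?_⟩
      · have : x ∈ S.erase b := by simp [hx]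
        exact Finset.ne_of_mem_erase this
      · have : x ∈ S.erase b := by simp [hx]
        have := Finset.mem_of_mem_erase this
        rw [hS] at this
        simpa using this
  have hAc := hcases u v A hA hvA (hAd ▸ hΔ u)
  have hBc := hcases v u B hB huB (hBd ▸ hΔ v)
  rcases hAc with hA0 | ⟨x, hAx, hxv, hux⟩
  · rcases hBc with hB0 | ⟨y, hBy, hyu, hvy⟩
    · exfalso
      apply hnice u v hadj
      constructor
      · have : (A.erase v).card = A.card - 1 := Finset.card_erase_of_mem hvA
        rw [hA0] at this
        simp at this
        have h1 : 1 ≤ A.card := Finset.card_pos.2 ⟨v, hvA⟩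
        omega
      · have : (B.erase u).card = B.card - 1 := Finset.card_erase_of_mem huB
        rw [hB0] at this
        simp at this
        have h1 : 1 ≤ B.card := Finset.card_pos.2 ⟨u, huB⟩
        omega
    · rw [hsumu, hsumv, hA0, hBy]
      simp only [Finset.sum_empty, Finset.sum_singleton]
      have h1 : 1 ≤ w s(v, y) := hpos _ (by simpa using hvy)
      omega
  · rcases hBc with hB0 | ⟨y, hBy, hyu, hvy⟩
    · rw [hsumu, hsumv, hB0, hAx]
      simp only [Finset.sum_empty, Finset.sum_singleton]
      have h1 : 1 ≤ w s(u, x) := hpos _ (by simpa using hux)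
      omega
    · rw [hsumu, hsumv, hAx, hBy]
      simp only [Finset.sum_singleton]
      have hne : s(u, x) ≠ s(v, y) := by
        intro h
        rw [Sym2.eq_iff] at h
        rcases h with ⟨h1, h2⟩ | ⟨h1, h2⟩
        · exact hadj.ne h1
        · exact hxv h2
      have : w s(u, x) ≠ w s(v, y) := fun h => hne (hinj (by simpa using hux) (by simpa using hvy) h)
      omega

theorem stmt_7 {V : Type*} [Fintype V] (G : SimpleGraph V) (hnice : Nice G)
    (hΔ : ∀ v, degG G v ≤ 2) :
    (∃ w : Sym2 V → ℕ,
        Set.BijOn w G.edgeSet ↑(Finset.Icc 1 G.edgeSet.ncard) ∧ NSD G w)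
      ∧ chiE1 G = G.edgeSet.ncard := by
  classical
  have hfin : G.edgeSet.Finite := Set.toFinite _
  set m := G.edgeSet.ncard with hm
  have hcard : hfin.toFinset.card = m := by
    rw [hm, Set.ncard_eq_toFinset_card _ hfin]
  have hcard2 : (Finset.Icc 1 m).card = m := by simp
  let e : hfin.toFinset ≃ (Finset.Icc 1 m) := Finset.equivOfCardEq (by rw [hcard, hcard2])
  let w : Sym2 V → ℕ := fun x => if h : x ∈ hfin.toFinset then (e ⟨x, h⟩ : ℕ) else 0
  have hbij : Set.BijOn w G.edgeSet ↑(Finset.Icc 1 m) := by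
    refine ⟨?_, ?_, ?_⟩
    · intro x hx
      have h : x ∈ hfin.toFinset := hfin.mem_toFinset.2 hx
      simp only [w, dif_pos h]
      exact_mod_cast (e ⟨x, h⟩).2
    · intro a ha b hb hab
      have ha' : a ∈ hfin.toFinset := hfin.mem_toFinset.2 ha
      have hb' : b ∈ hfin.toFinset := hfin.mem_toFinset.2 hb
      simp only [w, dif_pos ha', dif_pos hb'] at hab
      have : e ⟨a, ha'⟩ = e ⟨b, hb'⟩ := Subtype.ext (by exact_mod_cast hab)
      exact congrArg Subtype.val (e.injective this)
    · intro y hy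
      have hy' : y ∈ Finset.Icc 1 m := by exact_mod_cast hy
      obtain ⟨x, hx⟩ := e.surjective ⟨y, hy'⟩
      refine ⟨x.1, hfin.mem_toFinset.1 x.2, ?_⟩
      simp only [w, dif_pos x.2]
      rw [hx]
  have hpos : ∀ f ∈ G.edgeSet, 1 ≤ w f := by
    intro f hf
    have := hbij.mapsTo hf
    simp only [Finset.coe_Icc, Set.mem_Icc] at this
    exact this.1
  have hnsd : NSD G w := nsd_of_inj G hnice hΔ w hpos hbij.injOn
  refine ⟨⟨w, hbij, hnsd⟩, ?_⟩
  have hmem : m ∈ {k | ∃ w : Sym2 V → ℕ, (∀ f ∈ G.edgeSet, w f ∈ Finset.Icc 1 k) ∧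
      EdgeInjective G w ∧ NSD G w} := by
    refine ⟨w, ?_, ?_, hnsd⟩
    · intro f hf
      exact_mod_cast hbij.mapsTo hf
    · intro a ha b hb hab
      exact hbij.injOn ha hb hab
  apply le_antisymm
  · exact Nat.sInf_le hmem
  · apply le_csInf ⟨m, hmem⟩
    rintro k ⟨w', hIcc, hinj', -⟩
    have h1 : G.edgeSet.ncard ≤ (↑(Finset.Icc 1 k) : Set ℕ).ncard := by
      apply Set.ncard_le_ncard_of_injOn w'
      · intro a ha
        exact_mod_cast hIcc a ha
      · intro a ha b hb hab
        exact hinj' a ha b hb hab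
    rw [Set.ncard_coe_finset] at h1
    simpa using h1
end

section
/- For every nice finite simple graph G with m := |E(G)| edges, there exists an injective map w from the edge set of G into {1, 2, ..., 5m} that is a neighbour-sum-distinguishing edge-weighting of G. In particular, χ^{e,1}_Σ(G) ≤ 5·|E(G)|. -/
open scoped Classical
open Finset

lemma exists_good {V : Type*} [Fintype V] (G : SimpleGraph V) (hnice : Nice G) :
    ∃ w : Sym2 V → ℕ, (∀ e ∈ G.edgeSet, w e ∈ Finset.Icc 1 (5 * G.edgeSet.ncard)) ∧
      Set.InjOn w G.edgeSet ∧ NSD G w := by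
  have hfin : G.edgeSet.Finite := Set.toFinite _
  set m := G.edgeSet.ncard with hmdef
  set E : Finset (Sym2 V) := hfin.toFinset with hEdef
  have hEmem : ∀ e, e ∈ E ↔ e ∈ G.edgeSet := fun e => hfin.mem_toFinset
  have hmE : E.card = m := (Set.ncard_eq_toFinset_card _ hfin).symm
  by_cases hE0 : E = ∅
  · refine ⟨fun _ => 0, ?_, ?_, ?_⟩
    · intro e he; exact absurd ((hEmem e).mpr he) (by simp [hE0])
    · intro e he f hf _; exact absurd ((hEmem e).mpr he) (by simp [hE0])
    · intro u v huv heq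
      exact absurd ((hEmem _).mpr ((SimpleGraph.mem_edgeSet G).mpr huv)) (by simp [hE0])
  have hm1 : 1 ≤ m := by
    rw [← hmE]; exact Finset.card_pos.mpr (Finset.nonempty_of_ne_empty hE0)
  set β : Finset ℕ := Finset.Icc 1 (5 * m) with hβdef
  set wOf : (↥E ↪ ↥β) → Sym2 V → ℕ :=
    fun φ e => if h : e ∈ E then (φ ⟨e, h⟩ : ℕ) else 0 with hwOf
  -- basic bounds
  have hwmem : ∀ (φ : ↥E ↪ ↥β) (e : Sym2 V), e ∈ E → wOf φ e ∈ β := by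
    intro φ e he
    simp only [hwOf, dif_pos he]
    exact (φ ⟨e, he⟩).property
  have hwpos : ∀ (φ : ↥E ↪ ↥β) (e : Sym2 V), e ∈ E → 1 ≤ wOf φ e := by
    intro φ e he
    exact (Finset.mem_Icc.mp (hwmem φ e he)).1
  -- degree-1 lemma
  have hdeg1 : ∀ (φ : ↥E ↪ ↥β) u v, G.Adj u v → degG G u = 1 →
      vSum G (wOf φ) u < vSum G (wOf φ) v := by
    intro φ u v huv hdu
    have hvNu : v ∈ Finset.univ.filter (fun x => G.Adj u x) := by
      simp [huv]
    have hNu : Finset.univ.filter (fun x => G.Adj u x) = {v} := by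
      obtain ⟨a, ha⟩ := Finset.card_eq_one.mp hdu
      rw [ha] at hvNu ⊢
      rw [Finset.mem_singleton.mp hvNu]
    have hσu : vSum G (wOf φ) u = wOf φ s(u, v) := by
      rw [vSum, hNu, Finset.sum_singleton]
    have huNv : u ∈ Finset.univ.filter (fun x => G.Adj v x) := by
      simp [huv.symm]
    have hdv2 : 2 ≤ degG G v := by
      have h1 : 1 ≤ degG G v := Finset.card_pos.mpr ⟨u, huNv⟩
      have h2 : degG G v ≠ 1 := fun h => hnice u v huv ⟨hdu, h⟩
      omega
    have hσv : wOf φ s(v, u) + ∑ x ∈ (Finset.univ.filter (fun x => G.Adj v x)).erase u,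
        wOf φ s(v, x) = vSum G (wOf φ) v := by
      unfold vSum
      exact Finset.add_sum_erase _ (fun x => wOf φ s(v, x)) huNv
    have hpos : 0 < ∑ x ∈ (Finset.univ.filter (fun x => G.Adj v x)).erase u,
        wOf φ s(v, x) := by
      have hne : ((Finset.univ.filter (fun x => G.Adj v x)).erase u).Nonempty := by
        rw [← Finset.card_pos, Finset.card_erase_of_mem huNv]
        have : degG G v = (Finset.univ.filter (fun x => G.Adj v x)).card := rfl
        omega
      refine Finset.sum_pos ?_ hne
      intro y hy
      have hyv : G.Adj v y := by
        have := Finset.mem_of_mem_erase hy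
        simp only [Finset.mem_filter, Finset.mem_univ, true_and] at this
        exact this
      exact hwpos φ _ ((hEmem _).mpr ((SimpleGraph.mem_edgeSet G).mpr hyv))
    calc vSum G (wOf φ) u = wOf φ s(v, u) := by rw [hσu, Sym2.eq_swap]
      _ < vSum G (wOf φ) v := by omega
  -- badness
  set bad : (↥E ↪ ↥β) → Sym2 V → Prop := fun φ e =>
    ∃ u v, s(u, v) = e ∧ G.Adj u v ∧ vSum G (wOf φ) u = vSum G (wOf φ) v with hbaddef
  -- per-edge count
  have hcount : ∀ e ∈ E, (Finset.univ.filter (fun φ : ↥E ↪ ↥β => bad φ e)).card ≤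
      (5 * m).descFactorial (m - 1) := by
    intro e he
    induction e using Sym2.ind with
    | _ u v =>
    have huv : G.Adj u v := (SimpleGraph.mem_edgeSet G).mp ((hEmem _).mp he)
    have hbadred : ∀ φ : ↥E ↪ ↥β, bad φ s(u, v) →
        vSum G (wOf φ) u = vSum G (wOf φ) v := by
      rintro φ ⟨u', v', hs, hadj, heq⟩
      rcases Sym2.eq_iff.mp hs with ⟨rfl, rfl⟩ | ⟨rfl, rfl⟩
      · exact heq
      · exact heq.symm
    by_cases hdu : degG G u = 1
    · have : (Finset.univ.filter (fun φ : ↥E ↪ ↥β => bad φ s(u, v))) = ∅ := by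
        rw [Finset.filter_eq_empty_iff]
        intro φ _ hb
        exact absurd (hbadred φ hb) (Nat.ne_of_lt (hdeg1 φ u v huv hdu))
      rw [this]; simp
    by_cases hdv : degG G v = 1
    · have : (Finset.univ.filter (fun φ : ↥E ↪ ↥β => bad φ s(u, v))) = ∅ := by
        rw [Finset.filter_eq_empty_iff]
        intro φ _ hb
        exact absurd (hbadred φ hb).symm (Nat.ne_of_lt (hdeg1 φ v u huv.symm hdv))
      rw [this]; simp
    -- both degrees ≥ 2; pick x adj u, x ≠ v
    have hvNu : v ∈ Finset.univ.filter (fun x => G.Adj u x) := by simp [huv]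
    have hdu2 : 1 < (Finset.univ.filter (fun x => G.Adj u x)).card := by
      have h1 : 0 < (Finset.univ.filter (fun x => G.Adj u x)).card :=
        Finset.card_pos.mpr ⟨v, hvNu⟩
      have : degG G u = (Finset.univ.filter (fun x => G.Adj u x)).card := rfl
      omega
    obtain ⟨x, hxNu, hxv⟩ := Finset.exists_mem_ne hdu2 v
    have hux : G.Adj u x := by
      simp only [Finset.mem_filter, Finset.mem_univ, true_and] at hxNu; exact hxNu
    set f : Sym2 V := s(u, x) with hfdef
    have hfE : f ∈ E := (hEmem _).mpr ((SimpleGraph.mem_edgeSet G).mpr hux)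
    have hfe : f ≠ s(u, v) := by
      intro h
      rcases Sym2.eq_iff.mp h with ⟨-, h2⟩ | ⟨h1, -⟩
      · exact hxv h2
      · exact huv.ne h1
    set E' : Finset (Sym2 V) := E.erase f with hE'def
    have hincl : ∀ g ∈ E', g ∈ E := fun g hg => Finset.mem_of_mem_erase hg
    set incl : ↥E' ↪ ↥E :=
      ⟨fun y => ⟨y.1, hincl y.1 y.2⟩, by
        intro a b h
        have h' := congrArg (fun z : ↥E => z.1) h
        exact Subtype.ext h'⟩
      with hincldef
    -- key injectivity
    have hinj : Set.InjOn (fun φ : ↥E ↪ ↥β => incl.trans φ)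
        ↑(Finset.univ.filter (fun φ : ↥E ↪ ↥β => bad φ s(u, v))) := by
      intro φ hφ ψ hψ hr
      simp only [Finset.coe_filter, Set.mem_setOf_eq] at hφ hψ
      have hagree : ∀ g, g ∈ E → g ≠ f → wOf φ g = wOf ψ g := by
        intro g hg hgf
        have hg' : g ∈ E' := Finset.mem_erase.mpr ⟨hgf, hg⟩
        have := DFunLike.congr_fun hr (⟨g, hg'⟩ : ↥E')
        simp only [Function.Embedding.trans_apply] at this
        simp only [hwOf, dif_pos hg]
        exact congrArg Subtype.val this
      have hNuerase : ∀ x' ∈ (Finset.univ.filter (fun y => G.Adj u y)).erase x,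
          s(u, x') ∈ E ∧ s(u, x') ≠ f := by
        intro x' hx'
        have hx'x : x' ≠ x := (Finset.mem_erase.mp hx').1
        have hadj : G.Adj u x' := by
          have := Finset.mem_of_mem_erase hx'
          simp only [Finset.mem_filter, Finset.mem_univ, true_and] at this; exact this
        refine ⟨(hEmem _).mpr ((SimpleGraph.mem_edgeSet G).mpr hadj), ?_⟩
        intro h
        rcases Sym2.eq_iff.mp h with ⟨-, h2⟩ | ⟨h1, -⟩
        · exact hx'x h2
        · exact hux.ne h1
      have hNv : ∀ y ∈ Finset.univ.filter (fun y => G.Adj v y),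
          s(v, y) ∈ E ∧ s(v, y) ≠ f := by
        intro y hy
        have hadj : G.Adj v y := by
          simp only [Finset.mem_filter, Finset.mem_univ, true_and] at hy; exact hy
        refine ⟨(hEmem _).mpr ((SimpleGraph.mem_edgeSet G).mpr hadj), ?_⟩
        intro h
        rcases Sym2.eq_iff.mp h with ⟨h1, -⟩ | ⟨h1, -⟩
        · exact huv.ne' h1
        · exact hxv h1.symm
      -- decompositions
      have hdecφ : wOf φ f + ∑ x' ∈ (Finset.univ.filter (fun y => G.Adj u y)).erase x,
          wOf φ s(u, x') = vSum G (wOf φ) u := by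
        unfold vSum
        exact Finset.add_sum_erase _ (fun y => wOf φ s(u, y)) hxNu
      have hdecψ : wOf ψ f + ∑ x' ∈ (Finset.univ.filter (fun y => G.Adj u y)).erase x,
          wOf ψ s(u, x') = vSum G (wOf ψ) u := by
        unfold vSum
        exact Finset.add_sum_erase _ (fun y => wOf ψ s(u, y)) hxNu
      have hA : ∑ x' ∈ (Finset.univ.filter (fun y => G.Adj u y)).erase x,
          wOf φ s(u, x') = ∑ x' ∈ (Finset.univ.filter (fun y => G.Adj u y)).erase x,
          wOf ψ s(u, x') := by
        refine Finset.sum_congr rfl fun x' hx' => ?_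
        obtain ⟨h1, h2⟩ := hNuerase x' hx'
        exact hagree _ h1 h2
      have hV : vSum G (wOf φ) v = vSum G (wOf ψ) v := by
        refine Finset.sum_congr rfl fun y hy => ?_
        obtain ⟨h1, h2⟩ := hNv y hy
        exact hagree _ h1 h2
      have heqφ := hbadred φ hφ.2
      have heqψ := hbadred ψ hψ.2
      have hkey : wOf φ f + ∑ x' ∈ (Finset.univ.filter (fun y => G.Adj u y)).erase x,
          wOf φ s(u, x') = wOf ψ f + ∑ x' ∈ (Finset.univ.filter (fun y => G.Adj u y)).erase x,
          wOf ψ s(u, x') := by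
        rw [hdecφ, heqφ, hV, ← heqψ, ← hdecψ]
      rw [← hA] at hkey
      have hwf : wOf φ f = wOf ψ f := Nat.add_right_cancel hkey
      have hφψf : φ ⟨f, hfE⟩ = ψ ⟨f, hfE⟩ := by
        apply Subtype.ext
        simpa only [hwOf, dif_pos hfE] using hwf
      apply DFunLike.ext
      rintro ⟨g, hg⟩
      by_cases hgf : g = f
      · subst hgf; exact hφψf
      · apply Subtype.ext
        have := hagree g hg hgf
        simpa only [hwOf, dif_pos hg] using this
    have hcard := Finset.card_le_card_of_injOn (fun φ : ↥E ↪ ↥β => incl.trans φ)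
      (fun a _ => Finset.mem_univ _) hinj
    refine hcard.trans ?_
    rw [Finset.card_univ, Fintype.card_embedding_eq, Fintype.card_coe, Fintype.card_coe,
      hE'def, Finset.card_erase_of_mem hfE, hmE, hβdef, Nat.card_Icc,
      show 5 * m + 1 - 1 = 5 * m from by omega]
  -- assemble: exists good φ
  have hlt : (Finset.univ.filter (fun φ : ↥E ↪ ↥β => ∃ e ∈ E, bad φ e)).card <
      Fintype.card (↥E ↪ ↥β) := by
    have hsub : (Finset.univ.filter (fun φ : ↥E ↪ ↥β => ∃ e ∈ E, bad φ e)) ⊆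
        E.biUnion (fun e => Finset.univ.filter (fun φ : ↥E ↪ ↥β => bad φ e)) := by
      intro φ hφ
      rw [Finset.mem_filter] at hφ
      obtain ⟨-, e, he, hb⟩ := hφ
      exact Finset.mem_biUnion.mpr ⟨e, he, Finset.mem_filter.mpr ⟨Finset.mem_univ _, hb⟩⟩
    have h1 := (Finset.card_le_card hsub).trans Finset.card_biUnion_le
    have h2 : ∑ e ∈ E, (Finset.univ.filter (fun φ : ↥E ↪ ↥β => bad φ e)).card ≤
        m * (5 * m).descFactorial (m - 1) := by
      calc ∑ e ∈ E, (Finset.univ.filter (fun φ : ↥E ↪ ↥β => bad φ e)).card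
          ≤ ∑ _e ∈ E, (5 * m).descFactorial (m - 1) := Finset.sum_le_sum hcount
        _ = m * (5 * m).descFactorial (m - 1) := by
            rw [Finset.sum_const, smul_eq_mul, hmE]
    have hcardF : Fintype.card (↥E ↪ ↥β) = (5 * m).descFactorial m := by
      rw [Fintype.card_embedding_eq, Fintype.card_coe, Fintype.card_coe, hmE, hβdef,
        Nat.card_Icc, show 5 * m + 1 - 1 = 5 * m from by omega]
    have hdpos : 0 < (5 * m).descFactorial (m - 1) := by
      rcases Nat.eq_zero_or_pos ((5 * m).descFactorial (m - 1)) with h | h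
      · exfalso
        have := Nat.descFactorial_eq_zero_iff_lt.mp h
        omega
      · exact h
    have hdecgen : ∀ k : ℕ, 1 ≤ k →
        (5 * k).descFactorial k = (4 * k + 1) * (5 * k).descFactorial (k - 1) := by
      intro k hk
      obtain ⟨k', rfl⟩ : ∃ k', k = k' + 1 := ⟨k - 1, by omega⟩
      rw [Nat.descFactorial_succ]
      congr 2
      omega

    have hdec := hdecgen m hm1
    have : m * (5 * m).descFactorial (m - 1) < (4 * m + 1) * (5 * m).descFactorial (m - 1) :=
      Nat.mul_lt_mul_of_lt_of_le (by omega) (le_refl _) hdpos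
    omega
  have hgood : ∃ φ : ↥E ↪ ↥β, ¬ ∃ e ∈ E, bad φ e := by
    by_contra h
    push_neg at h
    have : (Finset.univ.filter (fun φ : ↥E ↪ ↥β => ∃ e ∈ E, bad φ e)) = Finset.univ := by
      rw [Finset.filter_eq_self]
      intro φ _
      obtain ⟨e, he, hb⟩ := h φ
      exact ⟨e, he, hb⟩
    rw [this, Finset.card_univ] at hlt
    exact lt_irrefl _ hlt
  obtain ⟨φ, hφ⟩ := hgood
  push_neg at hφ
  refine ⟨wOf φ, ?_, ?_, ?_⟩
  · intro e he
    exact hwmem φ e ((hEmem e).mpr he)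
  · intro e he g hg h
    have he' : e ∈ E := (hEmem e).mpr he
    have hg' : g ∈ E := (hEmem g).mpr hg
    simp only [hwOf, dif_pos he', dif_pos hg'] at h
    have := φ.injective (Subtype.ext h)
    exact congrArg Subtype.val this
  · intro u v huv heq
    have he : s(u, v) ∈ E := (hEmem _).mpr ((SimpleGraph.mem_edgeSet G).mpr huv)
    exact hφ _ he ⟨u, v, rfl, huv, heq⟩

theorem stmt_10 {V : Type*} [Fintype V] (G : SimpleGraph V) (hnice : Nice G) :
    (∃ w : Sym2 V → ℕ, Set.InjOn w G.edgeSet ∧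
        Set.MapsTo w G.edgeSet ↑(Finset.Icc 1 (5 * G.edgeSet.ncard)) ∧ NSD G w)
      ∧ chiE1 G ≤ 5 * G.edgeSet.ncard := by
  obtain ⟨w, hIcc, hInj, hNSD⟩ := exists_good G hnice
  constructor
  · exact ⟨w, hInj, fun e he => Finset.mem_coe.mpr (hIcc e he), hNSD⟩
  · exact Nat.sInf_le ⟨w, hIcc, fun e he f hf h => hInj he hf h, hNSD⟩
end

section
/- Let G be a nice finite simple graph with m := |E(G)| edges. Then for every set W of 2m distinct strictly positive integers, there exists an edge-injective neighbour-sum-distinguishing edge-weighting of G with all weights taken from W (i.e., an injective map from E(G) into W that is neighbour-sum-distinguishing). In particular, χ^{e,1}_Σ(G) ≤ 2·|E(G)|. -/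
open scoped Classical
open Finset

section Aux

variable {V : Type*} [Fintype V]

/-- partial sum at vertex `x` over edges in `S` other than `f`. -/
noncomputable def pS (w : Sym2 V → ℕ) (S : Finset (Sym2 V)) (f : Sym2 V) (x : V) : ℕ :=
  ∑ e ∈ S.filter (fun e => x ∈ e ∧ e ≠ f), w e

/-- The greedy invariant. -/
def InvP (G : SimpleGraph V) (S : Finset (Sym2 V)) (w : Sym2 V → ℕ) : Prop :=
  ∀ f ∈ G.edgeSet, ∀ x y : V, f = s(x, y) →
    (∀ e' ∈ G.edgeSet, e' ≠ f → (x ∈ e' ∨ y ∈ e') → e' ∈ S) →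
    pS w S f x ≠ pS w S f y

lemma deg_eq_one (G : SimpleGraph V) {x y : V} (hxy : G.Adj x y)
    (h : ∀ z, G.Adj x z → z = y) : degG G x = 1 := by
  unfold degG
  rw [Finset.card_eq_one]
  refine ⟨y, ?_⟩
  ext z
  simp only [Finset.mem_filter, Finset.mem_univ, true_and, Finset.mem_singleton]
  exact ⟨h z, fun hz => hz ▸ hxy⟩

lemma key (G : SimpleGraph V) (hnice : Nice G) (W : Finset ℕ)
    (hW : W.card = 2 * G.edgeSet.toFinset.card) :
    ∀ S : Finset (Sym2 V), ↑S ⊆ G.edgeSet →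
      ∃ w : Sym2 V → ℕ, (∀ e ∈ S, w e ∈ W) ∧ Set.InjOn w ↑S ∧ InvP G S w := by
  intro S
  induction S using Finset.induction_on with
  | empty =>
    intro _
    refine ⟨fun _ => 0, by simp, by simp, ?_⟩
    intro f hf x y hfxy hincl
    exfalso
    subst hfxy
    have hxy : G.Adj x y := by rwa [SimpleGraph.mem_edgeSet] at hf
    have hx1 : degG G x = 1 := by
      refine deg_eq_one G hxy (fun z hz => ?_)
      by_contra hzy
      have h1 : s(x, z) ∈ G.edgeSet := by rwa [SimpleGraph.mem_edgeSet]
      have h2 : s(x, z) ≠ s(x, y) := by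
        intro heq
        rw [Sym2.eq_iff] at heq
        rcases heq with ⟨_, h⟩ | ⟨h, _⟩
        · exact hzy h
        · exact hxy.ne h
      have := hincl _ h1 h2 (Or.inl (Sym2.mem_mk_left x z))
      simpa using this
    have hy1 : degG G y = 1 := by
      refine deg_eq_one G hxy.symm (fun z hz => ?_)
      by_contra hzx
      have h1 : s(y, z) ∈ G.edgeSet := by rwa [SimpleGraph.mem_edgeSet]
      have h2 : s(y, z) ≠ s(x, y) := by
        intro heq
        rw [Sym2.eq_iff] at heq
        rcases heq with ⟨h, _⟩ | ⟨_, h⟩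
        · exact hxy.ne h.symm
        · exact hzx h
      have := hincl _ h1 h2 (Or.inr (Sym2.mem_mk_left y z))
      simpa using this
    exact hnice x y hxy ⟨hx1, hy1⟩
  | @insert a S ha IH =>
    intro hsub
    rw [Finset.coe_insert, Set.insert_subset_iff] at hsub
    obtain ⟨haE, hSE⟩ := hsub
    obtain ⟨w, hwW, hinj, hinv⟩ := IH hSE
    set E := G.edgeSet.toFinset with hE
    have haE' : a ∈ E := Set.mem_toFinset.mpr haE
    have hSE' : S ⊆ E := fun e he => Set.mem_toFinset.mpr (hSE he)
    -- the set of bad values for each edge f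
    set badF : Sym2 V → Finset ℕ := fun f =>
      W.filter (fun c => ∃ x y : V, f = s(x, y) ∧ x ∈ a ∧ y ∉ a ∧ pS w S f x + c = pS w S f y)
      with hbadF
    have hbadcard : ∀ f, (badF f).card ≤ 1 := by
      intro f
      refine Finset.card_le_one.mpr (fun c hc c' hc' => ?_)
      rw [hbadF, Finset.mem_filter] at hc hc'
      obtain ⟨-, x, y, hf1, hxa, hya, heq⟩ := hc
      obtain ⟨-, x', y', hf2, hxa', hya', heq'⟩ := hc'
      rw [hf1, Sym2.eq_iff] at hf2
      rcases hf2 with ⟨hx, hy⟩ | ⟨hx, hy⟩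
      · subst hx; subst hy
        exact Nat.add_left_cancel (heq.trans heq'.symm)
      · subst hx; subst hy
        exact absurd hxa' hya
    set F : Finset ℕ := S.image w ∪ (E.erase a).biUnion badF with hF
    have hcardF : F.card < W.card := by
      have h1 : (S.image w).card ≤ S.card := Finset.card_image_le
      have h2 : S.card ≤ (E.erase a).card :=
        Finset.card_le_card (fun e he => Finset.mem_erase.mpr ⟨fun h => ha (by rwa [h] at he), hSE' he⟩)
      have h3 : ((E.erase a).biUnion badF).card ≤ ∑ f ∈ E.erase a, (badF f).card :=
        Finset.card_biUnion_le
      have h4 : ∑ f ∈ E.erase a, (badF f).card ≤ (E.erase a).card := by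
        calc ∑ f ∈ E.erase a, (badF f).card ≤ ∑ _f ∈ E.erase a, 1 :=
              Finset.sum_le_sum (fun f _ => hbadcard f)
          _ = (E.erase a).card := by simp
      have h5 : (E.erase a).card = E.card - 1 := Finset.card_erase_of_mem haE'
      have h6 : 1 ≤ E.card := Finset.card_pos.mpr ⟨a, haE'⟩
      have h7 : F.card ≤ (S.image w).card + ((E.erase a).biUnion badF).card :=
        Finset.card_union_le _ _
      rw [hW]
      omega
    have hex : ∃ c ∈ W, c ∉ F := by
      by_contra hcon
      push_neg at hcon
      exact absurd (Finset.card_le_card hcon) (not_le.mpr hcardF)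
    obtain ⟨c, hcW, hcF⟩ := hex
    have hcImage : c ∉ S.image w := fun h => hcF (Finset.mem_union_left _ h)
    have hcBad : ∀ f ∈ E, f ≠ a → c ∉ badF f := by
      intro f hf hfa h
      exact hcF (Finset.mem_union_right _ (Finset.mem_biUnion.mpr
        ⟨f, Finset.mem_erase.mpr ⟨hfa, hf⟩, h⟩))
    set w' : Sym2 V → ℕ := Function.update w a c with hw'
    have hws : ∀ e ∈ S, w' e = w e := fun e he =>
      Function.update_of_ne (fun h => ha (by rwa [h] at he)) _ _
    have hwa : w' a = c := Function.update_self _ _ _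
    -- the new partial sums
    have hnew : ∀ f, ∀ z : V, pS w' (insert a S) f z =
        (if z ∈ a ∧ a ≠ f then c else 0) + pS w S f z := by
      intro f z
      unfold pS
      rw [Finset.filter_insert]
      have hsame : ∑ e ∈ S.filter (fun e => z ∈ e ∧ e ≠ f), w' e =
          ∑ e ∈ S.filter (fun e => z ∈ e ∧ e ≠ f), w e :=
        Finset.sum_congr rfl (fun e he => hws e (Finset.mem_filter.mp he).1)
      by_cases h : z ∈ a ∧ a ≠ f
      · rw [if_pos h, if_pos h, Finset.sum_insert (fun hmem => ha (Finset.mem_filter.mp hmem).1),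
          hwa, hsame]
      · rw [if_neg h, if_neg h, hsame, zero_add]
    refine ⟨w', ?_, ?_, ?_⟩
    · intro e he
      rcases Finset.mem_insert.mp he with rfl | he
      · rw [hwa]; exact hcW
      · rw [hws e he]; exact hwW e he
    · rw [Finset.coe_insert]
      rw [Set.injOn_insert (fun h => ha (Finset.mem_coe.mp h))]
      constructor
      · intro e he e' he' heq
        exact hinj he he' (by rw [← hws e he, ← hws e' he', heq])
      · intro h
        obtain ⟨e, he, heq⟩ := h
        rw [hws e he] at heq
        exact hcImage (Finset.mem_image.mpr ⟨e, he, by rw [hwa] at heq; exact heq⟩)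
    · intro f hf x y hfxy hincl
      have hfE : f ∈ E := Set.mem_toFinset.mpr hf
      have hxyne : x ≠ y := by
        intro h
        exact G.not_isDiag_of_mem_edgeSet hf (hfxy ▸ (Sym2.mk_isDiag_iff.mpr h))
      by_cases hfa : f = a
      · -- case f = a
        subst hfa
        have hold : ∀ e' ∈ G.edgeSet, e' ≠ f → (x ∈ e' ∨ y ∈ e') → e' ∈ S := by
          intro e' he' hne hinc
          rcases Finset.mem_insert.mp (hincl e' he' hne hinc) with rfl | h
          · exact absurd rfl hne
          · exact h
        have := hinv f hf x y hfxy hold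
        rw [hnew, hnew, if_neg (by simp), if_neg (by simp), zero_add, zero_add]
        exact this
      · -- case f ≠ a
        by_cases hold : ∀ e' ∈ G.edgeSet, e' ≠ f → (x ∈ e' ∨ y ∈ e') → e' ∈ S
        · -- invariant hypothesis already held for S
          have hxa : x ∉ a := fun h => ha (hold a haE (fun h' => hfa h'.symm) (Or.inl h))
          have hya : y ∉ a := fun h => ha (hold a haE (fun h' => hfa h'.symm) (Or.inr h))
          have := hinv f hf x y hfxy hold
          rw [hnew, hnew, if_neg (fun h => hxa h.1), if_neg (fun h => hya h.1),
            zero_add, zero_add]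
          exact this
        · -- newly completed: a is incident to f
          push_neg at hold
          obtain ⟨e₀, he₀E, he₀f, he₀inc, he₀S⟩ := hold
          have he₀a : e₀ = a := by
            rcases Finset.mem_insert.mp (hincl e₀ he₀E he₀f he₀inc) with h | h
            · exact h
            · exact absurd h he₀S
          rw [he₀a] at he₀inc
          have hanf : a ≠ f := fun h => hfa h.symm
          have hnot_both : ¬(x ∈ a ∧ y ∈ a) := by
            intro h
            exact hfa (((Sym2.mem_and_mem_iff hxyne).mp h).trans hfxy.symm).symm
          rcases he₀inc with hxa | hya
          · have hya : y ∉ a := fun h => hnot_both ⟨hxa, h⟩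
            rw [hnew, hnew, if_pos (show x ∈ a ∧ a ≠ f from ⟨hxa, hanf⟩),
              if_neg (show ¬(y ∈ a ∧ a ≠ f) from fun h => hya h.1), zero_add]
            intro heq
            apply hcBad f hfE (fun h => hfa h)
            rw [hbadF, Finset.mem_filter]
            exact ⟨hcW, x, y, hfxy, hxa, hya, by omega⟩
          · have hxa : x ∉ a := fun h => hnot_both ⟨h, hya⟩
            rw [hnew, hnew, if_pos (show y ∈ a ∧ a ≠ f from ⟨hya, hanf⟩),
              if_neg (show ¬(x ∈ a ∧ a ≠ f) from fun h => hxa h.1), zero_add]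
            intro heq
            apply hcBad f hfE (fun h => hfa h)
            rw [hbadF, Finset.mem_filter]
            refine ⟨hcW, y, x, ?_, hya, hxa, by omega⟩
            rw [hfxy, Sym2.eq_swap]

lemma vSum_eq (G : SimpleGraph V) (w : Sym2 V → ℕ) (u : V) :
    vSum G w u = ∑ e ∈ G.edgeSet.toFinset.filter (fun e => u ∈ e), w e := by
  unfold vSum
  refine Finset.sum_bij (fun z _ => s(u, z)) ?_ ?_ ?_ ?_
  · intro z hz
    rw [Finset.mem_filter] at hz ⊢
    refine ⟨Set.mem_toFinset.mpr ?_, Sym2.mem_mk_left u z⟩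
    rw [SimpleGraph.mem_edgeSet]
    exact hz.2
  · intro z hz z' hz' heq
    exact Sym2.congr_right.mp heq
  · intro e he
    rw [Finset.mem_filter] at he
    obtain ⟨heE, hue⟩ := he
    refine ⟨Sym2.Mem.other hue, ?_, Sym2.other_spec hue⟩
    rw [Finset.mem_filter]
    refine ⟨Finset.mem_univ _, ?_⟩
    rw [← SimpleGraph.mem_edgeSet, Sym2.other_spec hue]
    exact Set.mem_toFinset.mp heE
  · intro z hz
    rfl

lemma filter_erase_aux (G : SimpleGraph V) (f : Sym2 V) (u : V) :
    G.edgeSet.toFinset.filter (fun e => u ∈ e ∧ e ≠ f) =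
      (G.edgeSet.toFinset.filter (fun e => u ∈ e)).erase f := by
  ext e
  simp only [Finset.mem_filter, Finset.mem_erase]
  tauto

lemma vSum_split (G : SimpleGraph V) (w : Sym2 V → ℕ) {u v : V} (huv : G.Adj u v) :
    vSum G w u = w s(u, v) + pS w G.edgeSet.toFinset s(u, v) u := by
  rw [vSum_eq]
  unfold pS
  rw [filter_erase_aux]
  rw [Finset.add_sum_erase]
  rw [Finset.mem_filter]
  exact ⟨Set.mem_toFinset.mpr huv, Sym2.mem_mk_left u v⟩

end Aux

theorem stmt_11 {V : Type*} [Fintype V] (G : SimpleGraph V) (hnice : Nice G) :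
    (∀ W : Finset ℕ, (∀ x ∈ W, 0 < x) → W.card = 2 * G.edgeSet.ncard →
        ∃ w : Sym2 V → ℕ, Set.InjOn w G.edgeSet ∧ Set.MapsTo w G.edgeSet ↑W ∧ NSD G w)
      ∧ chiE1 G ≤ 2 * G.edgeSet.ncard := by
  have hmain : ∀ W : Finset ℕ, W.card = 2 * G.edgeSet.ncard →
      ∃ w : Sym2 V → ℕ, Set.InjOn w G.edgeSet ∧ Set.MapsTo w G.edgeSet ↑W ∧ NSD G w := by
    intro W hcard
    have hW' : W.card = 2 * G.edgeSet.toFinset.card := by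
      rw [hcard, Set.ncard_eq_toFinset_card']
    obtain ⟨w, h1, h2, h3⟩ := key G hnice W hW' G.edgeSet.toFinset
      (by rw [Set.coe_toFinset])
    refine ⟨w, ?_, ?_, ?_⟩
    · rw [← Set.coe_toFinset G.edgeSet]
      exact h2
    · intro e he
      exact h1 e (Set.mem_toFinset.mpr he)
    · intro u v huv hsum
      have hf : s(u, v) ∈ G.edgeSet := huv
      have := h3 s(u, v) hf u v rfl
        (fun e' he' _ _ => Set.mem_toFinset.mpr he')
      apply this
      have hu := vSum_split G w huv
      have hv := vSum_split G w huv.symm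
      rw [Sym2.eq_swap] at hv
      rw [hu, hv] at hsum
      exact Nat.add_left_cancel hsum
  constructor
  · intro W _ hcard
    exact hmain W hcard
  · apply Nat.sInf_le
    obtain ⟨w, hinj, hmaps, hnsd⟩ := hmain (Finset.Icc 1 (2 * G.edgeSet.ncard)) (by simp)
    refine ⟨w, ?_, ?_, hnsd⟩
    · intro e he
      exact hmaps he
    · intro e he f hf heq
      exact hinj he hf heq
end

section
/- Let G be a nice finite simple graph with m := |E(G)| edges and maximum degree Δ := Δ(G). Then for every set W of m + 2Δ distinct strictly positive integers, there exists an edge-injective neighbour-sum-distinguishing edge-weighting of G with all weights taken from W (i.e., an injective map from E(G) into W that is neighbour-sum-distinguishing). In particular, χ^{e,1}_Σ(G) ≤ |E(G)| + 2Δ(G). -/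
open scoped Classical
open Finset

set_option linter.unusedSectionVars false

namespace Stmt12

variable {V : Type*} [Fintype V] (G : SimpleGraph V)

noncomputable def nbr (x : V) : Finset V := Finset.univ.filter (fun n => G.Adj x n)

noncomputable def EF : Finset (Sym2 V) := G.edgeSet.toFinset

noncomputable def m : ℕ := (EF G).card

noncomputable def idx (e : Sym2 V) : ℕ :=
  if h : e ∈ EF G then ((EF G).equivFin ⟨e, h⟩ : Fin (m G)).val else 0

lemma mem_EF {e : Sym2 V} : e ∈ EF G ↔ e ∈ G.edgeSet := Set.mem_toFinset

lemma idx_lt {e : Sym2 V} (h : e ∈ EF G) : idx G e < m G := by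
  rw [idx, dif_pos h]; exact ((EF G).equivFin ⟨e, h⟩).isLt

lemma idx_inj {e f : Sym2 V} (he : e ∈ EF G) (hf : f ∈ EF G)
    (h : idx G e = idx G f) : e = f := by
  rw [idx, dif_pos he, idx, dif_pos hf] at h
  have := (EF G).equivFin.injective (Fin.val_injective h)
  exact congrArg Subtype.val this

lemma exists_ek {k : ℕ} (hk : k < m G) : ∃ e ∈ EF G, idx G e = k := by
  refine ⟨((EF G).equivFin.symm ⟨k, hk⟩ : {x // x ∈ EF G}).val,
    ((EF G).equivFin.symm ⟨k, hk⟩).property, ?_⟩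
  rw [idx, dif_pos (((EF G).equivFin.symm ⟨k, hk⟩).property)]
  simp

def A2 (e f : Sym2 V) : Prop := f ≠ e ∧ ∃ v, v ∈ e ∧ v ∈ f

noncomputable def adjE (e : Sym2 V) : Finset (Sym2 V) := (EF G).filter (A2 e)

noncomputable def M (e : Sym2 V) : ℕ := (adjE G e).sup (idx G)

noncomputable def T (ω : ℕ → ℕ) (x y : V) : ℕ :=
  ∑ n ∈ (nbr G x).erase y, ω (idx G s(x, n))

noncomputable def bv (ω : ℕ → ℕ) : Sym2 V → ℕ :=
  Sym2.lift ⟨fun x y => max (T G ω x y - T G ω y x) (T G ω y x - T G ω x y),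
    by intro x y; dsimp; rw [max_comm]⟩

def Cond (ω : ℕ → ℕ) (e : Sym2 V) : Prop :=
  ∀ x y, s(x, y) = e → G.Adj x y → T G ω x y ≠ T G ω y x

-- edge form
lemma edge_form {e : Sym2 V} (he : e ∈ EF G) {a : V} (ha : a ∈ e) :
    ∃ c, G.Adj a c ∧ e = s(a, c) := by
  induction e with
  | _ p q =>
    rw [mem_EF, SimpleGraph.mem_edgeSet] at he
    rcases Sym2.mem_iff.1 ha with rfl | rfl
    · exact ⟨q, he, rfl⟩
    · exact ⟨p, he.symm, Sym2.eq_swap⟩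

lemma eq_of_two_mem {z : Sym2 V} {x y : V} (hxy : x ≠ y) (hx : x ∈ z) (hy : y ∈ z) :
    z = s(x, y) := by
  induction z with
  | _ p q =>
    rcases Sym2.mem_iff.1 hx with rfl | rfl
    · rcases Sym2.mem_iff.1 hy with rfl | rfl
      · exact absurd rfl hxy
      · rfl
    · rcases Sym2.mem_iff.1 hy with rfl | rfl
      · exact Sym2.eq_swap
      · exact absurd rfl hxy


lemma degG_eq (x : V) : degG G x = (nbr G x).card := rfl

lemma mem_nbr {x n : V} : n ∈ nbr G x ↔ G.Adj x n := by
  simp [nbr]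

lemma edge_mem_EF {a b : V} (h : G.Adj a b) : s(a, b) ∈ EF G := by
  rw [mem_EF, SimpleGraph.mem_edgeSet]; exact h

lemma adjE_nonempty (hnice : Nice G) {e : Sym2 V} (he : e ∈ EF G) :
    (adjE G e).Nonempty := by
  induction e with
  | _ a b =>
    have hab : G.Adj a b := (mem_EF G).1 he
    have h1 : 1 ≤ degG G a := by
      rw [degG_eq]
      exact Finset.card_pos.2 ⟨b, (mem_nbr G).2 hab⟩
    have h1b : 1 ≤ degG G b := by
      rw [degG_eq]
      exact Finset.card_pos.2 ⟨a, (mem_nbr G).2 hab.symm⟩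
    have h2 : 2 ≤ degG G a ∨ 2 ≤ degG G b := by
      have := hnice a b hab
      omega
    rcases h2 with h2 | h2
    · rw [degG_eq] at h2
      obtain ⟨c, hc, hcb⟩ := Finset.exists_mem_ne (show 1 < (nbr G a).card by omega) b
      refine ⟨s(a, c), Finset.mem_filter.2 ⟨edge_mem_EF G ((mem_nbr G).1 hc), ?_, a, ?_, ?_⟩⟩
      · intro h
        rw [Sym2.eq_iff] at h
        rcases h with ⟨-, h⟩ | ⟨h, -⟩
        · exact hcb h
        · exact hab.ne' h.symm
      · simp
      · simp
    · rw [degG_eq] at h2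
      obtain ⟨c, hc, hca⟩ := Finset.exists_mem_ne (show 1 < (nbr G b).card by omega) a
      refine ⟨s(b, c), Finset.mem_filter.2 ⟨edge_mem_EF G ((mem_nbr G).1 hc), ?_, b, ?_, ?_⟩⟩
      · intro h
        rw [Sym2.eq_iff] at h
        rcases h with ⟨h, -⟩ | ⟨-, h⟩
        · exact hab.ne h.symm
        · exact hca h
      · simp
      · simp

lemma adjE_subset {a b : V} (hab : G.Adj a b) :
    adjE G s(a, b) ⊆ ((nbr G a).image (fun c => s(a, c))) ∪ ((nbr G b).image (fun c => s(b, c))) := by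
  intro f hf
  obtain ⟨hfE, hne, v, hv, hvf⟩ := Finset.mem_filter.1 hf
  obtain ⟨c, hc, rfl⟩ := edge_form G hfE hvf
  rcases Sym2.mem_iff.1 hv with rfl | rfl
  · exact Finset.mem_union_left _ (Finset.mem_image.2 ⟨c, (mem_nbr G).2 hc, rfl⟩)
  · exact Finset.mem_union_right _ (Finset.mem_image.2 ⟨c, (mem_nbr G).2 hc, rfl⟩)

lemma adjE_card {a b : V} (hab : G.Adj a b) :
    (adjE G s(a, b)).card ≤ 2 * Finset.univ.sup (degG G) := by
  have h := Finset.card_le_card (adjE_subset G hab)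
  have h2 := Finset.card_union_le ((nbr G a).image (fun c => s(a, c)))
    ((nbr G b).image (fun c => s(b, c)))
  have h3 : ((nbr G a).image (fun c => s(a, c))).card ≤ Finset.univ.sup (degG G) :=
    le_trans Finset.card_image_le (by rw [← degG_eq]; exact Finset.le_sup (Finset.mem_univ a))
  have h4 : ((nbr G b).image (fun c => s(b, c))).card ≤ Finset.univ.sup (degG G) :=
    le_trans Finset.card_image_le (by rw [← degG_eq]; exact Finset.le_sup (Finset.mem_univ b))
  omega

lemma M_lt {e : Sym2 V} (he : e ∈ EF G) : M G e < m G := by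
  have hm : 0 < m G := Finset.card_pos.2 ⟨e, he⟩
  rw [M]
  rcases Finset.eq_empty_or_nonempty (adjE G e) with h | h
  · rw [h]; simpa using hm
  · rw [Finset.sup_lt_iff (by simpa using hm)]
    intro f hf
    exact idx_lt G (Finset.mem_filter.1 hf).1

lemma exists_M_attained {e : Sym2 V} (h : (adjE G e).Nonempty) :
    ∃ f ∈ adjE G e, idx G f = M G e := by
  obtain ⟨f, hf, hfx⟩ := Finset.exists_mem_eq_sup (adjE G e) h (idx G)
  exact ⟨f, hf, hfx.symm⟩


lemma ne_of_erase {x y n : V} (hadj : G.Adj x y) (hn : n ∈ (nbr G x).erase y) :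
    s(x, n) ≠ s(x, y) := by
  intro h
  rw [Sym2.eq_iff] at h
  rcases h with ⟨-, h⟩ | ⟨h, -⟩
  · exact (Finset.mem_erase.1 hn).1 h
  · exact hadj.ne h

lemma mem_adjE_of_erase {x y n : V} (hadj : G.Adj x y) (hn : n ∈ (nbr G x).erase y) :
    s(x, n) ∈ adjE G s(x, y) := by
  refine Finset.mem_filter.2 ⟨edge_mem_EF G ((mem_nbr G).1 (Finset.mem_of_mem_erase hn)), ?_, x, ?_, ?_⟩
  · exact ne_of_erase G hadj hn
  · simp
  · simp

lemma idx_le_M {x y n : V} (hadj : G.Adj x y) (hn : n ∈ (nbr G x).erase y) :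
    idx G s(x, n) ≤ M G s(x, y) :=
  Finset.le_sup (mem_adjE_of_erase G hadj hn)

lemma T_congr {ω1 ω2 : ℕ → ℕ} {x y : V} (hadj : G.Adj x y)
    (h : ∀ i ≤ M G s(x, y), ω1 i = ω2 i) : T G ω1 x y = T G ω2 x y := by
  refine Finset.sum_congr rfl (fun n hn => ?_)
  exact h _ (idx_le_M G hadj hn)

lemma greedy (hnice : Nice G) (W : Finset ℕ) (hpos : ∀ x ∈ W, 0 < x)
    (hcard : W.card = m G + 2 * Finset.univ.sup (degG G)) :
    ∀ k, k ≤ m G → ∃ ω : ℕ → ℕ,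
      (∀ j < k, ω j ∈ W) ∧
      (∀ i j, i < k → j < k → ω i = ω j → i = j) ∧
      (∀ e ∈ EF G, M G e < k → Cond G ω e) := by
  intro k
  induction k with
  | zero => exact fun _ => ⟨fun _ => 0, by omega, by omega, fun e he h => absurd h (by omega)⟩
  | succ k ih =>
    intro hk1
    obtain ⟨ω, hmem, hinj, hcond⟩ := ih (by omega)
    have hk : k < m G := hk1
    obtain ⟨ek, hekE, hekidx⟩ := exists_ek G hk
    set ω0 : ℕ → ℕ := Function.update ω k 0 with hω0
    set Bad : Finset ℕ := (adjE G ek).image (bv G ω0) with hBad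
    set Used : Finset ℕ := (Finset.range k).image ω with hUsed
    have hcards : (Used ∪ Bad).card < W.card := by
      have h1 : Used.card ≤ k := le_trans Finset.card_image_le (by simp)
      have h2 : Bad.card ≤ 2 * Finset.univ.sup (degG G) := by
        refine le_trans Finset.card_image_le ?_
        obtain ⟨a, b, hab⟩ : ∃ a b, G.Adj a b ∧ ek = s(a, b) := by
          induction ek with
          | _ a b => exact ⟨a, b, (mem_EF G).1 hekE, rfl⟩
        rw [hab.2]
        exact adjE_card G hab.1
      have h3 := Finset.card_union_le Used Bad
      omega
    obtain ⟨t, htW, htn⟩ : ∃ t ∈ W, t ∉ Used ∪ Bad := by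
      have h4 : (W \ (Used ∪ Bad)).Nonempty := by
        rw [← Finset.card_pos]
        have := Finset.le_card_sdiff (Used ∪ Bad) W
        omega
      obtain ⟨t, ht⟩ := h4
      exact ⟨t, (Finset.mem_sdiff.1 ht).1, (Finset.mem_sdiff.1 ht).2⟩
    refine ⟨Function.update ω k t, ?_, ?_, ?_⟩
    · intro j hj
      rcases eq_or_ne j k with rfl | hne
      · rwa [Function.update_self]
      · rw [Function.update_of_ne hne]; exact hmem j (by omega)
    · intro i j hi hj hij
      by_cases hi' : i = k
      · by_cases hj' : j = k
        · rw [hi', hj']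
        · exfalso
          rw [hi', Function.update_self, Function.update_of_ne hj'] at hij
          exact htn (Finset.mem_union_left _ (Finset.mem_image.2 ⟨j, Finset.mem_range.2 (by omega), hij.symm⟩))
      · by_cases hj' : j = k
        · exfalso
          rw [hj', Function.update_self, Function.update_of_ne hi'] at hij
          exact htn (Finset.mem_union_left _ (Finset.mem_image.2 ⟨i, Finset.mem_range.2 (by omega), hij⟩))
        · rw [Function.update_of_ne hi', Function.update_of_ne hj'] at hij
          exact hinj i j (by omega) (by omega) hij
    · intro e he hMe
      rcases lt_or_eq_of_le (Nat.lt_succ_iff.1 hMe) with hMe' | hMe'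
      · -- old condition, sums unchanged
        intro x y hxy hadj
        have hMxy : M G s(x, y) < k := by rw [hxy]; exact hMe'
        have h1 : T G (Function.update ω k t) x y = T G ω x y :=
          T_congr G hadj (fun i hi => Function.update_of_ne (by omega) _ _)
        have h2 : T G (Function.update ω k t) y x = T G ω y x := by
          have hMyx : M G s(y, x) < k := by rwa [Sym2.eq_swap]
          exact T_congr G hadj.symm (fun i hi => Function.update_of_ne (by omega) _ _)
        rw [h1, h2]
        exact hcond e he hMe' x y hxy hadj
      · -- new condition at this step
        -- ek is adjacent to e
        have hekadj : ek ∈ adjE G e := by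
          obtain ⟨f, hf, hfidx⟩ := exists_M_attained G (adjE_nonempty G hnice he)
          have : f = ek := idx_inj G (Finset.mem_filter.1 hf).1 hekE (by rw [hfidx, hMe', hekidx])
          rwa [← this]
        obtain ⟨heknee, v, hve, hvek⟩ := (Finset.mem_filter.1 hekadj).2
        intro x y hxy hadj heq
        -- reduce to the case x ∈ ek
        have aux : ∀ x y, s(x, y) = e → G.Adj x y → x ∈ ek →
            T G (Function.update ω k t) x y = T G (Function.update ω k t) y x → False := by
          intro x y hxy hadj hxek heq
          have hyek : y ∉ ek := by
            intro hy
            exact heknee (by rw [eq_of_two_mem hadj.ne hxek hy, hxy])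
          obtain ⟨c, hc, hekc⟩ := edge_form G hekE hxek
          have hcy : c ≠ y := by
            intro h
            exact heknee (by rw [hekc, h, hxy])
          have hcx : x ≠ c := hc.ne
          have hcmem : c ∈ (nbr G x).erase y :=
            Finset.mem_erase.2 ⟨hcy, (mem_nbr G).2 hc⟩
          -- split off the c-term; other terms have idx ≠ k
          have hsidefact : ∀ n ∈ ((nbr G x).erase y).erase c,
              idx G s(x, n) ≠ k := by
            intro n hn hidx
            have hnE : s(x, n) ∈ EF G :=
              edge_mem_EF G ((mem_nbr G).1 (Finset.mem_of_mem_erase (Finset.mem_of_mem_erase hn)))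
            have : s(x, n) = ek := idx_inj G hnE hekE (by rw [hidx, hekidx])
            rw [hekc, Sym2.eq_iff] at this
            rcases this with ⟨-, h⟩ | ⟨h, -⟩
            · exact (Finset.mem_erase.1 hn).1 h
            · exact hc.ne (h ▸ rfl) -- x = c contradiction? h : x = c
          have hTx : T G (Function.update ω k t) x y = t + T G ω0 x y := by
            rw [hω0, T, T, ← Finset.add_sum_erase _ _ hcmem, ← Finset.add_sum_erase _ _ hcmem]
            have hidxc : idx G s(x, c) = k := by rw [← hekc, hekidx]
            rw [hidxc, Function.update_self, Function.update_self]
            have hcg : ∀ n ∈ ((nbr G x).erase y).erase c,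
                Function.update ω k t (idx G s(x, n)) = Function.update ω k 0 (idx G s(x, n)) := by
              intro n hn
              rw [Function.update_of_ne (hsidefact n hn), Function.update_of_ne (hsidefact n hn)]
            rw [Finset.sum_congr rfl hcg]
            omega
          have hTy : T G (Function.update ω k t) y x = T G ω0 y x := by
            refine Finset.sum_congr rfl (fun n hn => ?_)
            have hidxn : idx G s(y, n) ≠ k := by
              intro hidx
              have hnE : s(y, n) ∈ EF G :=
                edge_mem_EF G ((mem_nbr G).1 (Finset.mem_of_mem_erase hn))
              have : s(y, n) = ek := idx_inj G hnE hekE (by rw [hidx, hekidx])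
              exact hyek (this ▸ Sym2.mem_mk_left y n)
            rw [hω0, Function.update_of_ne hidxn, Function.update_of_ne hidxn]
          rw [hTx, hTy] at heq
          have htpos : 0 < t := hpos t htW
          have hbv : bv G ω0 e = t := by
            rw [← hxy, bv, Sym2.lift_mk]
            dsimp
            omega
          refine htn (Finset.mem_union_right _ (Finset.mem_image.2 ⟨e, ?_, hbv⟩))
          refine Finset.mem_filter.2 ⟨he, fun h => heknee h.symm, v, hvek, hve⟩
        have hve' : v ∈ s(x, y) := by rw [hxy]; exact hve
        rcases Sym2.mem_iff.1 hve' with rfl | rfl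
        · exact aux v y hxy hadj hvek heq
        · exact aux v x (by rw [Sym2.eq_swap]; exact hxy) hadj.symm hvek heq.symm


lemma main {V : Type*} [Fintype V] (G : SimpleGraph V) (hnice : Nice G)
    (W : Finset ℕ) (hpos : ∀ x ∈ W, 0 < x)
    (hcard : W.card = G.edgeSet.ncard + 2 * Finset.univ.sup (degG G)) :
    ∃ w : Sym2 V → ℕ, Set.InjOn w G.edgeSet ∧ Set.MapsTo w G.edgeSet ↑W ∧ NSD G w := by
  classical
  have hmcard : G.edgeSet.ncard = m G := by
    rw [m, EF, Set.ncard_eq_toFinset_card']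
  rw [hmcard] at hcard
  obtain ⟨ω, hmem, hinj, hcond⟩ := greedy G hnice W hpos hcard (m G) le_rfl
  refine ⟨fun e => if e ∈ EF G then ω (idx G e) else 0, ?_, ?_, ?_⟩
  · intro e he f hf hef
    have he' : e ∈ EF G := (mem_EF G).2 he
    have hf' : f ∈ EF G := (mem_EF G).2 hf
    simp only [] at hef
    rw [if_pos he', if_pos hf'] at hef
    exact idx_inj G he' hf' (hinj _ _ (idx_lt G he') (idx_lt G hf') hef)
  · intro e he
    have he' : e ∈ EF G := (mem_EF G).2 he
    show (if e ∈ EF G then ω (idx G e) else 0) ∈ (W : Set ℕ)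
    rw [if_pos he']
    exact hmem _ (idx_lt G he')
  · intro u v huv
    have heE : s(u, v) ∈ EF G := edge_mem_EF G huv
    have hvu : s(v, u) = s(u, v) := Sym2.eq_swap
    have hsum : ∀ a b : V, G.Adj a b →
        vSum G (fun e => if e ∈ EF G then ω (idx G e) else 0) a
          = ω (idx G s(a, b)) + T G ω a b := by
      intro a b hab
      rw [vSum]
      have hbmem : b ∈ nbr G a := (mem_nbr G).2 hab
      rw [show (Finset.univ.filter (fun x => G.Adj a x)) = nbr G a from rfl,
        ← Finset.add_sum_erase (nbr G a) _ hbmem]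
      have h1 : ∀ x ∈ (nbr G a).erase b,
          (if s(a, x) ∈ EF G then ω (idx G s(a, x)) else 0) = ω (idx G s(a, x)) := by
        intro x hx
        rw [if_pos (edge_mem_EF G ((mem_nbr G).1 (Finset.mem_of_mem_erase hx)))]
      rw [if_pos (edge_mem_EF G hab), Finset.sum_congr rfl h1]
      rfl
    rw [hsum u v huv, hsum v u huv.symm]
    have hM : M G s(u, v) < m G := M_lt G heE
    have hC : T G ω u v ≠ T G ω v u := hcond _ heE hM u v rfl huv
    rw [show idx G s(v, u) = idx G s(u, v) by rw [hvu]]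
    omega

end Stmt12

theorem stmt_12 {V : Type*} [Fintype V] (G : SimpleGraph V) (hnice : Nice G) :
    (∀ W : Finset ℕ, (∀ x ∈ W, 0 < x) →
        W.card = G.edgeSet.ncard + 2 * Finset.univ.sup (degG G) →
        ∃ w : Sym2 V → ℕ, Set.InjOn w G.edgeSet ∧ Set.MapsTo w G.edgeSet ↑W ∧ NSD G w)
      ∧ chiE1 G ≤ G.edgeSet.ncard + 2 * Finset.univ.sup (degG G) := by
  constructor
  · exact fun W hpos hcard => Stmt12.main G hnice W hpos hcard
  · set K := G.edgeSet.ncard + 2 * Finset.univ.sup (degG G) with hK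
    have hWcard : (Finset.Icc 1 K).card = K := by
      rw [Nat.card_Icc]
      omega
    have hpos : ∀ x ∈ Finset.Icc 1 K, 0 < x := by
      intro x hx
      exact lt_of_lt_of_le one_pos (Finset.mem_Icc.1 hx).1
    obtain ⟨w, hinj, hmaps, hnsd⟩ := Stmt12.main G hnice (Finset.Icc 1 K) hpos hWcard
    refine Nat.sInf_le ⟨w, ?_, ?_, hnsd⟩
    · intro e he
      exact hmaps he
    · intro e he f hf hef
      exact hinj he hf hef
end
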